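/- arXiv:2108.12994 — 7 statements merged into one kernel-verified Lean document; each statement's English description precedes it below -/
import Mathlib

section
/- If G is a finite simple graph with at least one edge and χ(G) = Δ(G) + 1, then vs_χ(G) = ivs_χ(G), i.e., the chromatic vertex stability number of G equals its independent chromatic vertex stability number. -/
open SimpleGraph

/-- The chromatic number of a graph, as a natural number (for finite graphs this
is the usual chromatic number). -/
noncomputable def chromNum {V : Type*} (G : SimpleGraph V) : ℕ :=
  sInf {n : ℕ | G.Colorable n}

/-- The maximum degree Δ(G) of a finite graph. -/
noncomputable def maxDeg {V : Type*} [Fintype V] (G : SimpleGraph V) : ℕ :=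
  Finset.univ.sup fun v => Nat.card (G.neighborSet v)

/-- The chromatic vertex stability number: the minimum number of vertices whose
deletion results in a graph with chromatic number χ(G) − 1. -/
noncomputable def vsChi {V : Type*} [Fintype V] (G : SimpleGraph V) : ℕ :=
  sInf {k : ℕ | ∃ S : Finset V, S.card = k ∧
    chromNum (G.induce ((S : Set V))ᶜ) = chromNum G - 1}

/-- The independent chromatic vertex stability number: the minimum size of an
independent set of vertices whose deletion results in a graph with chromatic
number χ(G) − 1. -/
noncomputable def ivsChi {V : Type*} [Fintype V] (G : SimpleGraph V) : ℕ :=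
  sInf {k : ℕ | ∃ S : Finset V, S.card = k ∧
    (∀ u ∈ S, ∀ v ∈ S, ¬ G.Adj u v) ∧
    chromNum (G.induce ((S : Set V))ᶜ) = chromNum G - 1}

/-- The chromatic edge stability number: the minimum number of edges whose
deletion results in a graph with chromatic number χ(G) − 1. -/
noncomputable def esChi {V : Type*} (G : SimpleGraph V) : ℕ :=
  sInf {k : ℕ | ∃ F : Finset (Sym2 V), ↑F ⊆ G.edgeSet ∧ F.card = k ∧
    chromNum (G.deleteEdges ↑F) = chromNum G - 1}

lemma chromNum_colorable {V : Type*} [Fintype V] (G : SimpleGraph V) :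
    G.Colorable (chromNum G) :=
  Nat.sInf_mem (⟨Fintype.card V, G.colorable_of_fintype⟩ :
    {n : ℕ | G.Colorable n}.Nonempty)

lemma chromNum_le {V : Type*} {G : SimpleGraph V} {n : ℕ} (h : G.Colorable n) :
    chromNum G ≤ n := Nat.sInf_le h

/-- Key step: if deleting `S` achieves `Δ`-colorability and `u ∈ S` has a neighbor
`v ∈ S`, then deleting `S.erase u` also achieves `Δ`-colorability. -/
lemma key_extend {V : Type*} [Fintype V] [DecidableEq V] (G : SimpleGraph V)
    (S : Finset V) (u v : V) (hu : u ∈ S) (hv : v ∈ S) (huv : G.Adj u v)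
    (hc : (G.induce ((S : Set V))ᶜ).Colorable (maxDeg G)) :
    (G.induce (((S.erase u : Finset V) : Set V))ᶜ).Colorable (maxDeg G) := by
  classical
  set Δ := maxDeg G with hΔ
  obtain ⟨c⟩ := hc
  -- the neighbors of u outside S
  set T : Finset V := Finset.univ.filter (fun w => w ∉ S ∧ G.Adj u w) with hT
  have hTmem : ∀ w ∈ T, w ∉ S ∧ G.Adj u w := by
    intro w hw; simpa [hT] using hw
  -- T has at most Δ - 1 elements
  have hnf : (G.neighborSet u).Finite := Set.toFinite _
  have hTsub : T ⊆ hnf.toFinset.erase v := by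
    intro w hw
    obtain ⟨hwS, hwadj⟩ := hTmem w hw
    refine Finset.mem_erase.mpr ⟨?_, ?_⟩
    · rintro rfl; exact hwS hv
    · simp [Set.Finite.mem_toFinset, mem_neighborSet, hwadj]
  have hvnf : v ∈ hnf.toFinset := by
    simp [Set.Finite.mem_toFinset, mem_neighborSet, huv]
  have hnfΔ : hnf.toFinset.card ≤ Δ := by
    have h1 : Nat.card (G.neighborSet u) ≤ Δ :=
      Finset.le_sup (f := fun v => Nat.card (G.neighborSet v)) (Finset.mem_univ u)
    have h2 : (G.neighborSet u).ncard = hnf.toFinset.card :=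
      Set.ncard_eq_toFinset_card _ hnf
    rwa [Nat.card_coe_set_eq, h2] at h1
  have hTcard : T.card + 1 ≤ Δ := by
    have h1 : T.card ≤ hnf.toFinset.card - 1 := by
      have := Finset.card_le_card hTsub
      rwa [Finset.card_erase_of_mem hvnf] at this
    have h2 : 1 ≤ hnf.toFinset.card := Finset.card_pos.mpr ⟨v, hvnf⟩
    omega
  -- colors used on T
  set used : Finset (Fin Δ) := T.attach.image
    (fun w => c ⟨w.1, by
      have := hTmem w.1 w.2
      simpa [Set.mem_compl_iff] using this.1⟩) with hused
  have husedcard : used.card < Δ := by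
    calc used.card ≤ T.attach.card := Finset.card_image_le
    _ = T.card := Finset.card_attach
    _ < Δ := by omega
  obtain ⟨a, ha⟩ : ∃ a : Fin Δ, a ∉ used := by
    by_contra hcon
    push_neg at hcon
    have := Finset.eq_univ_iff_forall.mpr hcon
    rw [this, Finset.card_univ, Fintype.card_fin] at husedcard
    omega
  have hmemused : ∀ (x : V) (hxS : x ∈ ((S : Set V))ᶜ), G.Adj u x →
      c ⟨x, hxS⟩ ∈ used := by
    intro x hxS hadj
    have hxT : x ∈ T := by
      simp only [hT, Finset.mem_filter, Finset.mem_univ, true_and]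
      exact ⟨by simpa using hxS, hadj⟩
    rw [hused]
    exact Finset.mem_image.mpr ⟨⟨x, hxT⟩, Finset.mem_attach _ _, rfl⟩
  have hkey : ∀ z : V, z ∉ S.erase u → z ∉ ((S : Set V))ᶜ → z = u := by
    intro z hz1 hz2
    have hz : z ∈ S := by simpa using hz2
    by_contra h
    exact hz1 (Finset.mem_erase.mpr ⟨h, hz⟩)
  -- build the coloring of G - (S.erase u)
  refine ⟨Coloring.mk
    (fun x => if h : (x : V) ∈ ((S : Set V))ᶜ then c ⟨x, h⟩ else a) ?_⟩
  rintro ⟨x, hx⟩ ⟨y, hy⟩ hadj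
  have hadj' : G.Adj x y := hadj
  have hx' : x ∉ S.erase u := fun h => hx (by exact_mod_cast h)
  have hy' : y ∉ S.erase u := fun h => hy (by exact_mod_cast h)
  by_cases hxS : x ∈ ((S : Set V))ᶜ <;> by_cases hyS : y ∈ ((S : Set V))ᶜ
  · simp only [dif_pos hxS, dif_pos hyS]
    exact c.valid (by exact hadj' : (G.induce ((S : Set V))ᶜ).Adj ⟨x, hxS⟩ ⟨y, hyS⟩)
  · have hyu : y = u := hkey y hy' hyS
    simp only [dif_pos hxS, dif_neg hyS]
    intro h
    exact ha (h ▸ hmemused x hxS (by rw [hyu] at hadj'; exact hadj'.symm))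
  · have hxu : x = u := hkey x hx' hxS
    simp only [dif_neg hxS, dif_pos hyS]
    intro h
    exact ha (h.symm ▸ hmemused y hyS (by rw [hxu] at hadj'; exact hadj'))
  · have hxu : x = u := hkey x hx' hxS
    have hyu : y = u := hkey y hy' hyS
    exact absurd (hxu ▸ hyu ▸ hadj') (G.irrefl)


/-- If $G$ is a finite simple graph with at least one edge and
$χ(G) = Δ(G) + 1$, then $vs_χ(G) = ivs_χ(G)$. -/
theorem stmt_0 {V : Type*} [Fintype V] (G : SimpleGraph V)
    (hedge : G.edgeSet.Nonempty)
    (hchi : chromNum G = maxDeg G + 1) :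
    vsChi G = ivsChi G := by
  classical
  set A : Set ℕ := {k : ℕ | ∃ S : Finset V, S.card = k ∧
    chromNum (G.induce ((S : Set V))ᶜ) = chromNum G - 1} with hA
  set B : Set ℕ := {k : ℕ | ∃ S : Finset V, S.card = k ∧
    (∀ u ∈ S, ∀ v ∈ S, ¬ G.Adj u v) ∧
    chromNum (G.induce ((S : Set V))ᶜ) = chromNum G - 1} with hB
  have hvs : vsChi G = sInf A := rfl
  have hivs : ivsChi G = sInf B := rfl
  rcases A.eq_empty_or_nonempty with hAe | hAne
  · have hBe : B = ∅ := by
      apply Set.eq_empty_iff_forall_notMem.mpr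
      rintro k ⟨S, h1, _, h3⟩
      exact Set.eq_empty_iff_forall_notMem.mp hAe k ⟨S, h1, h3⟩
    rw [hvs, hivs, hAe, hBe]
  · have hΔ : chromNum G - 1 = maxDeg G := by omega
    have hk : vsChi G ∈ A := hvs ▸ Nat.sInf_mem hAne
    obtain ⟨S, hScard, hSchrom⟩ := hk
    have hindep : ∀ u ∈ S, ∀ v ∈ S, ¬ G.Adj u v := by
      intro u hu v hv huv
      have hcol : (G.induce ((S : Set V))ᶜ).Colorable (maxDeg G) := by
        have := chromNum_colorable (G.induce ((S : Set V))ᶜ)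
        rwa [hSchrom, hΔ] at this
      have hext := key_extend G S u v hu hv huv hcol
      have hup : chromNum (G.induce (((S.erase u : Finset V) : Set V))ᶜ) ≤ maxDeg G :=
        chromNum_le hext
      have hlow : maxDeg G ≤ chromNum (G.induce (((S.erase u : Finset V) : Set V))ᶜ) := by
        have hne : {n : ℕ | (G.induce (((S.erase u : Finset V) : Set V))ᶜ).Colorable n}.Nonempty :=
          ⟨Fintype.card _, by exact colorable_of_fintype _⟩
        refine le_csInf hne ?_
        intro n hn
        have hsub : ((S : Set V))ᶜ ≤ ((((S.erase u : Finset V)) : Set V))ᶜ :=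
          Set.compl_subset_compl.mpr (by exact_mod_cast Finset.erase_subset u S)
        have hcol2 : (G.induce ((S : Set V))ᶜ).Colorable n :=
          Colorable.of_hom (SimpleGraph.induceHomOfLE G hsub).toHom hn
        have := chromNum_le hcol2
        rw [hSchrom, hΔ] at this
        exact this
      have hmem : S.card - 1 ∈ A := by
        refine ⟨S.erase u, Finset.card_erase_of_mem hu, ?_⟩
        rw [hΔ]
        omega
      have hle : sInf A ≤ S.card - 1 := Nat.sInf_le hmem
      have hpos : 1 ≤ S.card := Finset.card_pos.mpr ⟨u, hu⟩
      rw [← hvs] at hle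
      omega
    have hmemB : vsChi G ∈ B := ⟨S, hScard, hindep, hSchrom⟩
    have h1 : ivsChi G ≤ vsChi G := hivs ▸ Nat.sInf_le hmemB
    have h2 : vsChi G ≤ ivsChi G := by
      obtain ⟨S', h1', _, h3'⟩ : ivsChi G ∈ B := hivs ▸ Nat.sInf_mem ⟨_, hmemB⟩
      exact hvs ▸ Nat.sInf_le ⟨S', h1', h3'⟩
    omega
end

section
/- If G is a finite simple graph with at least one edge and χ(G) = Δ(G) + 1, then vs_χ(G) equals the number of connected components C of G with χ(C) = Δ(G) + 1. -/
open SimpleGraph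

section Helpers

universe u
variable {W : Type u}

lemma colorable_chromNum [Finite W] (H : SimpleGraph W) : H.Colorable (chromNum H) := by
  have : Fintype W := Fintype.ofFinite W
  have hne : {n : ℕ | H.Colorable n}.Nonempty :=
    ⟨Fintype.card W, show H.Colorable _ from H.colorable_of_fintype⟩
  exact Nat.sInf_mem hne

lemma chromNum_le_s2 {H : SimpleGraph W} {n : ℕ} (h : H.Colorable n) : chromNum H ≤ n :=
  Nat.sInf_le h

lemma chromNum_le_iff [Finite W] {H : SimpleGraph W} {n : ℕ} :
    chromNum H ≤ n ↔ H.Colorable n :=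
  ⟨fun h => Colorable.mono h (colorable_chromNum H), chromNum_le_s2⟩

lemma chromNum_le_of_embedding {W' : Type*} [Finite W'] {H : SimpleGraph W}
    {H' : SimpleGraph W'} (f : H ↪g H') : chromNum H ≤ chromNum H' :=
  chromNum_le_s2 (Colorable.of_hom f.toHom (colorable_chromNum H'))

lemma comp_coloring_congr {H : SimpleGraph W} {n : ℕ}
    (f : ∀ c : H.ConnectedComponent, (H.induce c.supp).Coloring (Fin n))
    {c c' : H.ConnectedComponent} (h : c = c') (v : W) (hv : v ∈ c.supp)
    (hv' : v ∈ c'.supp) : f c ⟨v, hv⟩ = f c' ⟨v, hv'⟩ := by subst h; rfl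

lemma colorable_of_components {H : SimpleGraph W} {n : ℕ}
    (h : ∀ c : H.ConnectedComponent, (H.induce c.supp).Colorable n) : H.Colorable n := by
  have f : ∀ c : H.ConnectedComponent, (H.induce c.supp).Coloring (Fin n) :=
    fun c => (h c).some
  refine ⟨Coloring.mk (fun v => f (H.connectedComponentMk v) ⟨v, rfl⟩) ?_⟩
  intro v w hadj heq
  have hc : H.connectedComponentMk v = H.connectedComponentMk w :=
    ConnectedComponent.sound hadj.reachable
  have hw : w ∈ (H.connectedComponentMk v).supp := hc.symm
  rw [← comp_coloring_congr f hc w hw rfl] at heq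
  exact (f (H.connectedComponentMk v)).valid (by exact hadj) heq

lemma nbr_induce_le [Finite W] (H : SimpleGraph W) (s : Set W) (w : ↥s) :
    Nat.card ((H.induce s).neighborSet w) ≤ Nat.card (H.neighborSet ↑w) := by
  refine Nat.card_le_card_of_injective
    (fun u => ⟨↑↑u, u.2⟩ : ((H.induce s).neighborSet w) → (H.neighborSet ↑w)) ?_
  intro a b hab
  simp only [Subtype.mk.injEq] at hab
  exact Subtype.ext (Subtype.ext (Subtype.mk.inj hab))

lemma nbr_induce_lt [Finite W] (H : SimpleGraph W) (s : Set W) (w : ↥s) {y : W}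
    (hy : y ∉ s) (hadj : H.Adj ↑w y) :
    Nat.card ((H.induce s).neighborSet w) < Nat.card (H.neighborSet ↑w) := by
  have h1 : Nat.card ((H.induce s).neighborSet w) ≤
      Nat.card ↥(H.neighborSet ↑w \ {y}) := by
    refine Nat.card_le_card_of_injective
      (fun u => ⟨↑↑u, u.2, ?_⟩ :
        ((H.induce s).neighborSet w) → ↥(H.neighborSet ↑w \ {y})) ?_
    · intro hmem
      rw [Set.mem_singleton_iff] at hmem
      exact hy (hmem ▸ (↑u : ↥s).2)
    · intro a b hab
      simp only [Subtype.mk.injEq] at hab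
      exact Subtype.ext (Subtype.ext (Subtype.mk.inj hab))
  have h2 : Nat.card ↥(H.neighborSet ↑w \ {y}) < Nat.card (H.neighborSet ↑w) := by
    rw [Nat.card_coe_set_eq, Nat.card_coe_set_eq]
    exact Set.ncard_diff_singleton_lt_of_mem hadj (Set.toFinite _)
  omega

lemma exists_exit (H : SimpleGraph W) (A : Set W) :
    ∀ {a b : W}, H.Walk a b → a ∈ A → b ∉ A → ∃ u y, u ∈ A ∧ y ∉ A ∧ H.Adj u y := by
  intro a b p
  induction p with
  | nil => intro h h'; exact absurd h h'
  | @cons a c b hadj q ih =>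
    intro ha hb
    by_cases hc : c ∈ A
    · exact ih hc hb
    · exact ⟨a, c, ha, hc, hadj⟩

lemma colorable_insert {V : Type*} (G : SimpleGraph V) (A : Set V) (v : V) {n : ℕ}
    (h : (G.induce A).Colorable n) : (G.induce (insert v A)).Colorable (n + 1) := by
  classical
  obtain ⟨C⟩ := h
  refine ⟨Coloring.mk
    (fun w => if hw : (w : V) = v then Fin.last n
      else Fin.castSucc (C ⟨w, w.2.resolve_left hw⟩)) ?_⟩
  intro a b hab heq
  have hADJ : G.Adj ↑a ↑b := hab
  by_cases ha : (a : V) = v <;> by_cases hb : (b : V) = v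
  · rw [ha, hb] at hADJ
    exact G.loopless.irrefl v hADJ
  · rw [dif_pos ha, dif_neg hb] at heq
    exact absurd heq.symm (Fin.castSucc_lt_last _).ne
  · rw [dif_neg ha, dif_pos hb] at heq
    exact absurd heq (Fin.castSucc_lt_last _).ne
  · rw [dif_neg ha, dif_neg hb] at heq
    exact C.valid (by exact hADJ) (Fin.castSucc_injective n heq)

/-- Nested induced subgraphs embed into the induced subgraph on the image. -/
def nestedEmb {V : Type*} (G : SimpleGraph V) (s : Set V) (t : Set ↥s) :
    ((G.induce s).induce t) ↪g G.induce (Subtype.val '' t) where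
  toFun a := ⟨↑↑a, ⟨↑a, a.2, rfl⟩⟩
  inj' := by
    intro a b hab
    simp only [Subtype.mk.injEq] at hab
    exact Subtype.ext (Subtype.ext (Subtype.mk.inj hab))
  map_rel_iff' := by intro a b; exact Iff.rfl

/-- Key peeling lemma: if every nonempty adjacency-closed set contains a vertex of
degree `< k`, and all degrees are `≤ k`, then the graph is `k`-colorable. -/
lemma claimC (k : ℕ) : ∀ (N : ℕ) (W : Type u) (_ : Finite W) (H : SimpleGraph W),
    Nat.card W ≤ N →
    (∀ w, Nat.card (H.neighborSet w) ≤ k) →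
    (∀ B : Set W, B.Nonempty → (∀ a ∈ B, ∀ y, H.Adj a y → y ∈ B) →
      ∃ w, w ∈ B ∧ Nat.card (H.neighborSet w) < k) →
    H.Colorable k := by
  intro N
  induction N with
  | zero =>
    intro W _ H hcard _ _
    have : IsEmpty W := by
      rcases Nat.card_eq_zero.mp (Nat.le_zero.mp hcard) with h | h
      · exact h
      · exact absurd ‹Finite W› h.not_finite
    exact Colorable.of_isEmpty k
  | succ n ih =>
    intro W _ H hcard hdeg hdef
    classical
    cases isEmpty_or_nonempty W with
    | inl h => exact Colorable.of_isEmpty k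
    | inr h =>
      obtain ⟨x, -, hxdef⟩ := hdef Set.univ ⟨Classical.arbitrary W, trivial⟩
        (fun _ _ _ _ => trivial)
      set s : Set W := {x}ᶜ with hs_def
      have hxs : x ∉ s := by simp [hs_def]
      have hcard' : Nat.card ↥s ≤ n := by
        have h1 : s.ncard < Nat.card W := by
          have h2 := Set.ncard_diff_singleton_lt_of_mem (Set.mem_univ x) Set.finite_univ
          rw [Set.ncard_univ] at h2
          rw [hs_def, Set.compl_eq_univ_diff]
          exact h2
        rw [Nat.card_coe_set_eq]
        omega
      have hdeg' : ∀ w : ↥s, Nat.card ((H.induce s).neighborSet w) ≤ k :=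
        fun w => (nbr_induce_le H s w).trans (hdeg ↑w)
      have hdef' : ∀ B : Set ↥s, B.Nonempty →
          (∀ a ∈ B, ∀ y, (H.induce s).Adj a y → y ∈ B) →
          ∃ w, w ∈ B ∧ Nat.card ((H.induce s).neighborSet w) < k := by
        intro B hBne hBcl
        by_cases hadjx : ∃ a : ↥s, a ∈ B ∧ H.Adj ↑a x
        · obtain ⟨a, haB, hax⟩ := hadjx
          exact ⟨a, haB, lt_of_lt_of_le (nbr_induce_lt H s a hxs hax) (hdeg ↑a)⟩
        · push_neg at hadjx
          set B0 : Set W := Subtype.val '' B with hB0_def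
          have hB0ne : B0.Nonempty := hBne.image _
          have hB0cl : ∀ a ∈ B0, ∀ y, H.Adj a y → y ∈ B0 := by
            rintro a ⟨a', ha'B, rfl⟩ y hay
            have hyx : y ≠ x := by rintro rfl; exact hadjx a' ha'B hay
            have hys : y ∈ s := by simp [hs_def, hyx]
            have hadj' : (H.induce s).Adj a' ⟨y, hys⟩ := hay
            exact ⟨⟨y, hys⟩, hBcl a' ha'B _ hadj', rfl⟩
          obtain ⟨w, hwB0, hwdef⟩ := hdef B0 hB0ne hB0cl
          obtain ⟨w', hw'B, rfl⟩ := hwB0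
          exact ⟨w', hw'B, lt_of_le_of_lt (nbr_induce_le H s w') hwdef⟩
      obtain ⟨C⟩ := ih ↥s inferInstance (H.induce s) hcard' hdeg' hdef'
      -- extend the coloring to x
      letI : Fintype ↥(H.neighborSet x) := Fintype.ofFinite _
      have hmem_s : ∀ u : ↥(H.neighborSet x), (↑u : W) ∈ s := by
        intro u
        simp only [hs_def, Set.mem_compl_iff, Set.mem_singleton_iff]
        intro hux
        have hu2 : H.Adj x ↑u := u.2
        rw [hux] at hu2
        exact H.loopless.irrefl x hu2
      set used : Finset (Fin k) :=
        Finset.image (fun u : ↥(H.neighborSet x) => C ⟨↑u, hmem_s u⟩) Finset.univ with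
        hused_def
      have hused_card : used.card < k := by
        calc used.card ≤ Fintype.card ↥(H.neighborSet x) := by
              apply (Finset.card_image_le).trans
              simp
          _ = Nat.card ↥(H.neighborSet x) := (Nat.card_eq_fintype_card).symm
          _ < k := hxdef
      have hfree : ∃ i : Fin k, i ∉ used := by
        by_contra hcon
        push_neg at hcon
        have : (Finset.univ : Finset (Fin k)) ⊆ used := fun i _ => hcon i
        have := Finset.card_le_card this
        rw [Finset.card_univ, Fintype.card_fin] at this
        omega
      obtain ⟨i, hi⟩ := hfree
      refine ⟨Coloring.mk
        (fun w => if hw : w = x then i else C ⟨w, by simp [hs_def, hw]⟩) ?_⟩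
      intro a b hab heq
      by_cases ha : a = x <;> by_cases hb : b = x
      · rw [ha, hb] at hab; exact H.loopless.irrefl x hab
      · rw [dif_pos ha, dif_neg hb] at heq
        refine hi ?_
        rw [heq, hused_def]
        refine Finset.mem_image.mpr ⟨⟨b, by subst ha; exact hab⟩, Finset.mem_univ _, rfl⟩
      · rw [dif_neg ha, dif_pos hb] at heq
        refine hi ?_
        rw [← heq, hused_def]
        refine Finset.mem_image.mpr ⟨⟨a, by subst hb; exact hab.symm⟩, Finset.mem_univ _, rfl⟩
      · rw [dif_neg ha, dif_neg hb] at heq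
        have hadj' : (H.induce s).Adj ⟨a, by simp [hs_def, ha]⟩ ⟨b, by simp [hs_def, hb]⟩ :=
          hab
        exact C.valid hadj' heq

end Helpers

/-- If $G$ is a finite simple graph with at least one edge and
$χ(G) = Δ(G) + 1$, then $vs_χ(G)$ equals the number of connected components
$C$ of $G$ with $χ(C) = Δ(G) + 1$. -/
theorem stmt_2 {V : Type*} [Fintype V] (G : SimpleGraph V)
    (hedge : G.edgeSet.Nonempty)
    (hchi : chromNum G = maxDeg G + 1) :
    vsChi G =
      Nat.card {c : G.ConnectedComponent //
        chromNum (G.induce c.supp) = maxDeg G + 1} := by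
  classical
  set Δ := maxDeg G with hΔ
  set Bad : G.ConnectedComponent → Prop :=
    fun c => chromNum (G.induce c.supp) = Δ + 1 with hBad_def
  have hdegbound : ∀ v, Nat.card (G.neighborSet v) ≤ Δ := fun v =>
    Finset.le_sup (f := fun v => Nat.card (G.neighborSet v)) (Finset.mem_univ v)
  haveI : Finite G.ConnectedComponent :=
    Finite.of_surjective G.connectedComponentMk (fun c => c.exists_rep)
  letI : Fintype {c : G.ConnectedComponent // Bad c} := Fintype.ofFinite _
  set NB : ℕ := Nat.card {c : G.ConnectedComponent // Bad c} with hNB_def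
  -- basic facts
  have hGnotcol : ¬ G.Colorable Δ := by
    intro h
    have := chromNum_le_s2 h
    omega
  have hcomp_le : ∀ c : G.ConnectedComponent, chromNum (G.induce c.supp) ≤ Δ + 1 := by
    intro c
    have := chromNum_le_of_embedding (SimpleGraph.Embedding.induce c.supp (G := G))
    omega
  have hgood_col : ∀ c : G.ConnectedComponent, ¬ Bad c → (G.induce c.supp).Colorable Δ := by
    intro c hc
    have h1 := hcomp_le c
    have h2 : chromNum (G.induce c.supp) ≤ Δ := by
      rcases lt_or_eq_of_le h1 with h | h
      · omega
      · exact absurd h hc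
    exact chromNum_le_iff.mp h2
  have hbad_exists : ∃ c, Bad c := by
    by_contra hcon
    push_neg at hcon
    exact hGnotcol (colorable_of_components (fun c => hgood_col c (hcon c)))
  -- choose a representative vertex in each bad component
  have hpick' : ∀ c : {c : G.ConnectedComponent // Bad c},
      ∃ v, G.connectedComponentMk v = c.1 := fun c => c.1.exists_rep
  choose pick hpick using hpick'
  have hpick_inj : Function.Injective pick := by
    intro c c' h
    apply Subtype.ext
    rw [← hpick c, ← hpick c', h]
  set S : Finset V := Finset.image pick Finset.univ with hS_def
  have hS_mem : ∀ v, v ∈ S ↔ ∃ c, pick c = v := by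
    intro v
    simp [hS_def]
  have hS_card : S.card = NB := by
    rw [hS_def, Finset.card_image_of_injective _ hpick_inj, Finset.card_univ,
      hNB_def, Nat.card_eq_fintype_card]
  -- the lower bound : every valid deletion set has at least NB vertices
  have hlower : ∀ k, (∃ S' : Finset V, S'.card = k ∧
      chromNum (G.induce ((S' : Set V))ᶜ) = chromNum G - 1) → NB ≤ k := by
    rintro k ⟨S', hcard', hchrom'⟩
    rw [hchi] at hchrom'
    simp only [Nat.add_sub_cancel] at hchrom'
    have hmeet : ∀ c : {c : G.ConnectedComponent // Bad c},
        ∃ v, v ∈ S' ∧ v ∈ c.1.supp := by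
      intro c
      by_contra hcon
      push_neg at hcon
      have hsub : c.1.supp ⊆ ((S' : Set V))ᶜ := by
        intro z hz hzS
        exact hcon z hzS hz
      have := chromNum_le_of_embedding (G.induceHomOfLE hsub)
      rw [hchrom'] at this
      have hbad : chromNum (G.induce (c.1.supp)) = Δ + 1 := c.2
      omega
    choose φ hφS hφsupp using hmeet
    have hφinj : Function.Injective φ := by
      intro c c' h
      apply Subtype.ext
      have h1 := hφsupp c
      have h2 := hφsupp c'
      rw [ConnectedComponent.mem_supp_iff] at h1 h2
      rw [← h1, ← h2, h]
    have hinj2 : Function.Injective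
        (fun c : {c : G.ConnectedComponent // Bad c} => (⟨φ c, hφS c⟩ : {v // v ∈ S'})) := by
      intro c c' h
      exact hφinj (congrArg Subtype.val h)
    have := Nat.card_le_card_of_injective _ hinj2
    rw [hNB_def] at *
    calc Nat.card {c : G.ConnectedComponent // Bad c}
        ≤ Nat.card {v // v ∈ S'} := this
      _ = S'.card := by rw [Nat.card_eq_fintype_card, Fintype.card_coe]
      _ = k := hcard'
  -- the upper bound : deleting S works
  have hupper : chromNum (G.induce ((S : Set V))ᶜ) = chromNum G - 1 := by
    rw [hchi]
    simp only [Nat.add_sub_cancel]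
    have hSsub : ∀ v ∈ (↑S : Set V), ∃ c : {c : G.ConnectedComponent // Bad c},
        pick c = v := by
      intro v hv
      exact (hS_mem v).mp hv
    -- upper: Colorable Δ
    have hcolup : (G.induce ((S : Set V))ᶜ).Colorable Δ := by
      apply colorable_of_components
      intro D
      set A : Set V := Subtype.val '' D.supp with hA_def
      -- reduce to G.induce A
      suffices hA : (G.induce A).Colorable Δ by
        exact Colorable.of_hom (nestedEmb G _ D.supp).toHom hA
      obtain ⟨⟨a, haS⟩, haD⟩ := D.exists_rep
      have haA : a ∈ A := ⟨⟨a, haS⟩, haD, rfl⟩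
      set c₀ : G.ConnectedComponent := G.connectedComponentMk a with hc₀_def
      have hAsub : A ⊆ c₀.supp := by
        rintro z ⟨⟨z', hz'S⟩, hz'D, rfl⟩
        have hreach' : (G.induce ((S : Set V))ᶜ).Reachable ⟨z', hz'S⟩ ⟨a, haS⟩ := by
          apply ConnectedComponent.exact
          rw [ConnectedComponent.mem_supp_iff] at hz'D
          rw [hz'D]
          exact haD.symm
        have hreach : G.Reachable z' a :=
          hreach'.map (SimpleGraph.Embedding.induce ((S : Set V))ᶜ (G := G)).toHom
        rw [ConnectedComponent.mem_supp_iff, hc₀_def]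
        exact ConnectedComponent.sound hreach
      have hAcompl : A ⊆ ((S : Set V))ᶜ := by
        rintro z ⟨⟨z', hz'S⟩, _, rfl⟩
        exact hz'S
      by_cases hbad : Bad c₀
      · -- use the peeling lemma
        set x : V := pick ⟨c₀, hbad⟩ with hx_def
        have hxsupp : x ∈ c₀.supp := by
          rw [ConnectedComponent.mem_supp_iff]
          exact hpick ⟨c₀, hbad⟩
        have hxS : x ∈ (S : Set V) := by
          rw [Finset.mem_coe, hS_mem]
          exact ⟨⟨c₀, hbad⟩, rfl⟩
        have hxA : x ∉ A := fun hx => hAcompl hx hxS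
        apply claimC Δ (Nat.card ↥A) ↥A inferInstance (G.induce A) le_rfl
          (fun w => (nbr_induce_le G A w).trans (hdegbound ↑w))
        intro B hBne hBcl
        set B0 : Set V := Subtype.val '' B with hB0_def
        obtain ⟨⟨u, huA⟩, huB⟩ := hBne
        have huB0 : u ∈ B0 := ⟨⟨u, huA⟩, huB, rfl⟩
        have hxB0 : x ∉ B0 := by
          rintro ⟨⟨u', hu'A⟩, _, rfl⟩
          exact hxA hu'A
        have hreach : G.Reachable u x := by
          apply ConnectedComponent.exact
          have h1 : G.connectedComponentMk u = c₀ := hAsub huA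
          have h2 : G.connectedComponentMk x = c₀ := hxsupp
          rw [h1, h2]
        obtain ⟨p⟩ := hreach
        obtain ⟨a', y, ha'B0, hyB0, hadj⟩ := exists_exit G B0 p huB0 hxB0
        obtain ⟨⟨a'', ha''A⟩, ha''B, rfl⟩ := ha'B0
        by_cases hyA : y ∈ A
        · exfalso
          have hadj' : (G.induce A).Adj ⟨a'', ha''A⟩ ⟨y, hyA⟩ := hadj
          exact hyB0 ⟨⟨y, hyA⟩, hBcl _ ha''B _ hadj', rfl⟩
        · exact ⟨⟨a'', ha''A⟩, ha''B,
            lt_of_lt_of_le (nbr_induce_lt G A ⟨a'', ha''A⟩ hyA hadj) (hdegbound a'')⟩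
      · -- good component : colorable with Δ colors already
        have h1 : (G.induce c₀.supp).Colorable Δ := hgood_col c₀ hbad
        exact Colorable.of_hom (G.induceHomOfLE hAsub).toHom h1
    -- lower: chromNum ≥ Δ
    have hlow : Δ ≤ chromNum (G.induce ((S : Set V))ᶜ) := by
      obtain ⟨c₁, hc₁⟩ := hbad_exists
      set x₁ : V := pick ⟨c₁, hc₁⟩ with hx₁_def
      have hx₁supp : x₁ ∈ c₁.supp := by
        rw [ConnectedComponent.mem_supp_iff]
        exact hpick ⟨c₁, hc₁⟩
      have hsub : c₁.supp \ {x₁} ⊆ ((S : Set V))ᶜ := by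
        rintro z ⟨hz1, hz2⟩ hzS
        obtain ⟨c', hc'⟩ := (hS_mem z).mp hzS
        have hz'supp : z ∈ c'.1.supp := by
          rw [ConnectedComponent.mem_supp_iff, ← hc']
          exact hpick c'
        rw [ConnectedComponent.mem_supp_iff] at hz1 hz'supp
        have hcc : c' = ⟨c₁, hc₁⟩ := Subtype.ext (hz'supp.symm.trans hz1)
        refine hz2 ?_
        show z = x₁
        rw [← hc', hcc]
      set m : ℕ := chromNum (G.induce (c₁.supp \ {x₁})) with hm_def
      have hcol : (G.induce (c₁.supp \ {x₁})).Colorable m := colorable_chromNum _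
      have hins := colorable_insert G (c₁.supp \ {x₁}) x₁ hcol
      have hset : insert x₁ (c₁.supp \ {x₁}) = c₁.supp := by
        rw [Set.insert_diff_singleton, Set.insert_eq_self]
        exact hx₁supp
      rw [hset] at hins
      have hΔm : Δ + 1 ≤ m + 1 := by
        have h5 := chromNum_le_s2 hins
        have h6 : chromNum (G.induce c₁.supp) = Δ + 1 := hc₁
        omega
      have hmono := chromNum_le_of_embedding (G.induceHomOfLE hsub)
      omega
    have := chromNum_le_iff.mpr hcolup
    omega
  -- conclude
  have hmem : NB ∈ {k : ℕ | ∃ S' : Finset V, S'.card = k ∧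
      chromNum (G.induce ((S' : Set V))ᶜ) = chromNum G - 1} := ⟨S, hS_card, hupper⟩
  have : vsChi G = NB := by
    apply le_antisymm
    · exact Nat.sInf_le hmem
    · exact le_csInf ⟨NB, hmem⟩ (fun k hk => hlower k hk)
  rw [this, hNB_def]
end

section
/- If G is a finite simple graph that is neither edgeless nor complete, then vs_χ(G) + vs_χ(Ḡ) ≤ n(G) + 1, where Ḡ is the complement of G and n(G) is the number of vertices of G. -/
open SimpleGraph

lemma exists_adj {V : Type*} {G : SimpleGraph V} (h : G ≠ ⊥) : ∃ u v, G.Adj u v := by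
  by_contra hc
  push_neg at hc
  exact h (by ext u v; simp [hc u v])

lemma two_le_chromNum {V : Type*} [Fintype V] {G : SimpleGraph V} (h : G ≠ ⊥) :
    2 ≤ chromNum G := by
  obtain ⟨u, v, huv⟩ := exists_adj h
  obtain ⟨C⟩ := chromNum_colorable G
  have hne : C u ≠ C v := C.valid huv
  have : 1 < Fintype.card (Fin (chromNum G)) :=
    Fintype.one_lt_card_iff_nontrivial.mpr ⟨C u, C v, hne⟩
  simp at this
  omega

lemma class_nonempty {V : Type*} [Fintype V] {G : SimpleGraph V}
    (C : G.Coloring (Fin (chromNum G))) (h1 : 1 ≤ chromNum G) (i : Fin (chromNum G)) :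
    ∃ v, C v = i := by
  by_contra h
  push_neg at h
  have D : G.Coloring {x : Fin (chromNum G) // x ≠ i} :=
    SimpleGraph.Coloring.mk (fun v => ⟨C v, h v⟩)
      (fun huv => by simpa [Subtype.ext_iff] using C.valid huv)
  have hc := D.colorable
  have hcard : Fintype.card {x : Fin (chromNum G) // x ≠ i} = chromNum G - 1 := by
    simp [Fintype.card_subtype_compl]
  rw [hcard] at hc
  have := chromNum_le hc
  omega

lemma key_eq {V : Type*} [Fintype V] {G : SimpleGraph V} (hbot : G ≠ ⊥)
    (C : G.Coloring (Fin (chromNum G))) (c : Fin (chromNum G))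
    (S : Finset V) (hS : ∀ v, v ∈ S ↔ C v = c) :
    chromNum (G.induce ((S : Set V))ᶜ) = chromNum G - 1 := by
  have h2 : 2 ≤ chromNum G := two_le_chromNum hbot
  -- upper bound
  have D : (G.induce ((S : Set V))ᶜ).Coloring {x : Fin (chromNum G) // x ≠ c} :=
    SimpleGraph.Coloring.mk
      (fun v => ⟨C v.1, fun h => v.2 (by simpa using (hS v.1).mpr h)⟩)
      (fun huv => by
        simp only [ne_eq, Subtype.mk.injEq]
        exact C.valid huv)
  have hc := D.colorable
  have hcard : Fintype.card {x : Fin (chromNum G) // x ≠ c} = chromNum G - 1 := by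
    simp [Fintype.card_subtype_compl]
  rw [hcard] at hc
  have hub : chromNum (G.induce ((S : Set V))ᶜ) ≤ chromNum G - 1 := chromNum_le hc
  -- lower bound
  have hlow : ∀ k : ℕ, (G.induce ((S : Set V))ᶜ).Colorable k → chromNum G ≤ k + 1 := by
    rintro k ⟨D'⟩
    classical
    have E : G.Coloring (Option (Fin k)) :=
      SimpleGraph.Coloring.mk
        (fun v => if h : v ∈ S then none else some (D' ⟨v, by simpa using h⟩))
        (by
          intro u v huv
          by_cases hu : u ∈ S <;> by_cases hv : v ∈ S
          · exact absurd (((hS u).mp hu).trans ((hS v).mp hv).symm) (C.valid huv)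
          · simp only [dif_pos hu, dif_neg hv]
            exact fun h => by cases h
          · simp only [dif_pos hv, dif_neg hu]
            exact fun h => by cases h
          · simp only [dif_neg hu, dif_neg hv, ne_eq, Option.some.injEq]
            intro hsome
            exact D'.valid (by simpa using huv :
              (G.induce ((S : Set V))ᶜ).Adj ⟨u, by simpa using hu⟩ ⟨v, by simpa using hv⟩) hsome)
    have hcE := E.colorable
    have : Fintype.card (Option (Fin k)) = k + 1 := by simp
    rw [this] at hcE
    exact chromNum_le hcE
  refine le_antisymm hub ?_
  haveI : Fintype ((S : Set V)ᶜ : Set V) := Fintype.ofFinite _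
  have hmem := chromNum_colorable (G.induce ((S : Set V))ᶜ)
  have := hlow _ hmem
  omega

lemma class_card_bound {V : Type*} [Fintype V] {G : SimpleGraph V}
    (C : G.Coloring (Fin (chromNum G))) (h1 : 1 ≤ chromNum G) (c : Fin (chromNum G))
    (S : Finset V) (hS : ∀ v, v ∈ S ↔ C v = c) :
    S.card + (chromNum G - 1) ≤ Fintype.card V := by
  classical
  have hne := fun i => class_nonempty C h1 i
  let f : {i : Fin (chromNum G) // i ≠ c} → {v : V // v ∉ S} := fun i =>
    ⟨(hne i.1).choose, fun hmem => i.2 (((hne i.1).choose_spec ▸ (hS _).mp hmem : (i.1 : Fin _) = c))⟩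
  have hinj : Function.Injective f := by
    intro i j hij
    have : C (hne i.1).choose = C (hne j.1).choose := by
      simpa [f, Subtype.ext_iff] using congrArg (fun x => C x.1) hij
    rw [(hne i.1).choose_spec, (hne j.1).choose_spec] at this
    exact Subtype.ext this
  have hcardle := Fintype.card_le_of_injective f hinj
  have h1' : Fintype.card {i : Fin (chromNum G) // i ≠ c} = chromNum G - 1 := by
    simp [Fintype.card_subtype_compl]
  have h2' : Fintype.card {v : V // v ∉ S} = Fintype.card V - S.card := by
    simp [Fintype.card_subtype_compl]
  rw [h1', h2'] at hcardle
  have := S.card_le_univ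
  omega

lemma clique_card_bound {V : Type*} [Fintype V] {G : SimpleGraph V}
    (C : G.Coloring (Fin (chromNum G))) (D : Gᶜ.Coloring (Fin (chromNum Gᶜ)))
    (d : Fin (chromNum Gᶜ)) (T : Finset V) (hT : ∀ v, v ∈ T ↔ D v = d) :
    T.card ≤ chromNum G := by
  classical
  let g : {v : V // v ∈ T} → Fin (chromNum G) := fun v => C v.1
  have hinj : Function.Injective g := by
    intro u v huv
    by_contra hne
    have hne' : u.1 ≠ v.1 := fun h => hne (Subtype.ext h)
    have hnadj : ¬ Gᶜ.Adj u.1 v.1 := fun hadj =>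
      D.valid hadj (((hT u.1).mp u.2).trans ((hT v.1).mp v.2).symm)
    have hadj : G.Adj u.1 v.1 := by
      by_contra h
      exact hnadj ((G.compl_adj u.1 v.1).mpr ⟨hne', h⟩)
    exact C.valid hadj huv
  have := Fintype.card_le_of_injective g hinj
  simpa [Fintype.card_coe] using this

/-- Nordhaus-Gaddum type result: if $G$ is neither edgeless nor complete, then
$vs_χ(G) + vs_χ(\bar G) ≤ n(G) + 1$. -/
theorem stmt_7 {V : Type*} [Fintype V] (G : SimpleGraph V)
    (hbot : G ≠ ⊥) (htop : G ≠ ⊤) :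
    vsChi G + vsChi Gᶜ ≤ Fintype.card V + 1 := by
  classical
  have hcbot : Gᶜ ≠ ⊥ := fun h => htop (by rw [← compl_compl G, h, compl_bot])
  obtain ⟨C⟩ := chromNum_colorable G
  obtain ⟨D⟩ := chromNum_colorable Gᶜ
  have h2 : 2 ≤ chromNum G := two_le_chromNum hbot
  have h2c : 2 ≤ chromNum Gᶜ := two_le_chromNum hcbot
  set c : Fin (chromNum G) := ⟨0, by omega⟩
  set d : Fin (chromNum Gᶜ) := ⟨0, by omega⟩
  set S : Finset V := Finset.univ.filter (fun v => C v = c) with hSdef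
  set T : Finset V := Finset.univ.filter (fun v => D v = d) with hTdef
  have hS : ∀ v, v ∈ S ↔ C v = c := by intro v; simp [hSdef]
  have hT : ∀ v, v ∈ T ↔ D v = d := by intro v; simp [hTdef]
  have hv1 : vsChi G ≤ S.card :=
    Nat.sInf_le ⟨S, rfl, key_eq hbot C c S hS⟩
  have hv2 : vsChi Gᶜ ≤ T.card :=
    Nat.sInf_le ⟨T, rfl, key_eq hcbot D d T hT⟩
  have hb1 := class_card_bound C (by omega) c S hS
  have hb2 := clique_card_bound C D d T hT
  omega
end

section
/- For every finite simple graph G with at least one edge, vs_χ(G) ≤ n(G)/χ(G), where n(G) is the number of vertices of G. -/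
open SimpleGraph

/-- For every finite simple graph $G$ with at least one edge,
$vs_χ(G) ≤ n(G)/χ(G)$. -/
theorem stmt_8 {V : Type*} [Fintype V] (G : SimpleGraph V)
    (hedge : G.edgeSet.Nonempty) :
    (vsChi G : ℝ) ≤ (Fintype.card V : ℝ) / (chromNum G : ℝ) := by
  classical
  obtain ⟨e, he⟩ := hedge
  induction e using Sym2.ind with
  | _ x y =>
  have hadj : G.Adj x y := he
  set c := chromNum G with hcdef
  have hCol : G.Colorable c := by
    rw [hcdef]; exact Nat.sInf_mem (s := {n : ℕ | G.Colorable n}) ⟨_, G.colorable_of_fintype⟩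
  obtain ⟨C⟩ := hCol
  have hc2 : 2 ≤ c := by
    have hne : C x ≠ C y := C.valid hadj
    have : 1 < Fintype.card (Fin c) := Fintype.one_lt_card_iff.mpr ⟨_, _, hne⟩
    simpa [Nat.succ_le_iff] using this
  haveI : Nonempty (Fin c) := ⟨⟨0, by omega⟩⟩
  set f : Fin c → ℕ := fun j => (Finset.univ.filter fun v => C v = j).card with hf
  have hsum : ∑ j, f j = Fintype.card V := by
    rw [← Finset.card_univ, Finset.card_eq_sum_card_fiberwise (f := fun v => C v)
      (t := Finset.univ) (fun x _ => Finset.mem_univ _)]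
  obtain ⟨i, -, hi⟩ := Finset.exists_min_image Finset.univ f Finset.univ_nonempty
  set S : Finset V := Finset.univ.filter fun v => C v = i with hS
  have hmemS : ∀ v : V, v ∈ ((S : Set V))ᶜ ↔ C v ≠ i := by
    intro v; simp [hS]
  -- upper bound coloring for the induced graph
  set H := G.induce ((S : Set V))ᶜ with hH
  have hHle : chromNum H ≤ c - 1 := by
    have D : H.Coloring {j : Fin c // j ≠ i} :=
      Coloring.mk (fun v => ⟨C v.1, (hmemS v.1).mp v.2⟩)
        (by
          intro a b hab h
          have hGadj : G.Adj a.1 b.1 := hab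
          exact C.valid hGadj (congrArg Subtype.val h))
    have hcard : Fintype.card {j : Fin c // j ≠ i} = c - 1 := by
      have := Fintype.card_subtype_compl (fun j : Fin c => j = i)
      simpa [Fintype.card_subtype_eq] using this
    have : H.Colorable (c - 1) := by rw [← hcard]; exact D.colorable
    exact Nat.sInf_le this
  have hHge : c - 1 ≤ chromNum H := by
    set k := chromNum H with hk
    have hColH : H.Colorable k := by
      rw [hk]; exact Nat.sInf_mem (s := {n : ℕ | H.Colorable n}) ⟨_, H.colorable_of_fintype⟩
    obtain ⟨D'⟩ := hColH
    have E : G.Coloring (Fin (k + 1)) :=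
      Coloring.mk
        (fun v => if h : C v = i then Fin.last k
          else (D' ⟨v, (hmemS v).mpr h⟩).castSucc)
        (by
          intro a b hab h
          by_cases ha : C a = i <;> by_cases hb : C b = i
          · exact C.valid hab (ha.trans hb.symm)
          · rw [dif_pos ha, dif_neg hb] at h
            exact absurd h.symm (Fin.castSucc_lt_last _).ne
          · rw [dif_neg ha, dif_pos hb] at h
            exact absurd h (Fin.castSucc_lt_last _).ne
          · rw [dif_neg ha, dif_neg hb] at h
            have hadj' : H.Adj ⟨a, (hmemS a).mpr ha⟩ ⟨b, (hmemS b).mpr hb⟩ := hab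
            exact D'.valid hadj' (Fin.castSucc_injective _ h))
    have : c ≤ k + 1 := Nat.sInf_le (show G.Colorable (k+1) by simpa using E.colorable)
    omega
  have hkey : chromNum H = c - 1 := le_antisymm hHle hHge
  have hvs : vsChi G ≤ S.card := Nat.sInf_le ⟨S, rfl, hkey⟩
  have hmul : c * f i ≤ Fintype.card V := by
    calc c * f i = Finset.univ.card • f i := by simp [mul_comm]
    _ ≤ ∑ j, f j := Finset.card_nsmul_le_sum _ _ _ (fun j _ => hi j (Finset.mem_univ j))
    _ = Fintype.card V := hsum
  have hfi : f i = S.card := rfl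
  calc (vsChi G : ℝ) ≤ (S.card : ℝ) := by exact_mod_cast hvs
    _ ≤ (Fintype.card V : ℝ) / (c : ℝ) := by
        rw [le_div_iff₀ (by exact_mod_cast (by omega : 0 < c))]
        rw [← hfi]
        exact_mod_cast (by rw [mul_comm] at hmul; exact hmul)
end

section
/- For every natural number r there exists a finite simple graph G with at least one edge such that ivs_χ(G) > r · vs_χ(G). -/
open SimpleGraph

def gP (m u v : ℕ) : Prop :=
  (u < 4 ∧ v < 4) ∨
  (4 ≤ u ∧ 4 ≤ v ∧ (u-4)/2 = (v-4)/2) ∨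
  (4 ≤ u ∧ v < 4 ∧ (((u-4)/2 < m ∧ v < 2) ∨ (m ≤ (u-4)/2 ∧ 2 ≤ v))) ∨
  (4 ≤ v ∧ u < 4 ∧ (((v-4)/2 < m ∧ u < 2) ∨ (m ≤ (v-4)/2 ∧ 2 ≤ u)))

def gG (m : ℕ) : SimpleGraph (Fin (4*m+4)) where
  Adj u v := u.val ≠ v.val ∧ gP m u.val v.val
  symm := by
    constructor
    rintro u v ⟨h1, h2⟩
    refine ⟨h1.symm, ?_⟩
    unfold gP at *
    omega
  loopless := by constructor; rintro v ⟨h1, _⟩; exact h1 rfl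

lemma gG_adj_mk {m x y : ℕ} (hx : x < 4*m+4) (hy : y < 4*m+4)
    (h1 : x ≠ y) (h2 : gP m x y) :
    (gG m).Adj ⟨x, hx⟩ ⟨y, hy⟩ := ⟨h1, h2⟩

lemma colorable_of_fun {V : Type*} (G : SimpleGraph V) (k : ℕ) (f : V → ℕ)
    (hb : ∀ v, f v < k) (hv : ∀ u v, G.Adj u v → f u ≠ f v) : G.Colorable k :=
  ⟨SimpleGraph.Coloring.mk (fun v => ⟨f v, hb v⟩)
    (fun {u w} h hc => hv u w h (by simpa using congrArg Fin.val hc))⟩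

lemma no_col3 {V : Type*} {G : SimpleGraph V} {v0 v1 v2 v3 : V}
    (h01 : G.Adj v0 v1) (h02 : G.Adj v0 v2) (h03 : G.Adj v0 v3)
    (h12 : G.Adj v1 v2) (h13 : G.Adj v1 v3) (h23 : G.Adj v2 v3) :
    ¬ G.Colorable 3 := by
  rintro ⟨C⟩
  have e01 := Fin.val_ne_iff.mpr (C.valid h01)
  have e02 := Fin.val_ne_iff.mpr (C.valid h02)
  have e03 := Fin.val_ne_iff.mpr (C.valid h03)
  have e12 := Fin.val_ne_iff.mpr (C.valid h12)
  have e13 := Fin.val_ne_iff.mpr (C.valid h13)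
  have e23 := Fin.val_ne_iff.mpr (C.valid h23)
  have b0 := (C v0).isLt; have b1 := (C v1).isLt
  have b2 := (C v2).isLt; have b3 := (C v3).isLt
  omega

lemma no_col2 {V : Type*} {G : SimpleGraph V} {v0 v1 v2 : V}
    (h01 : G.Adj v0 v1) (h02 : G.Adj v0 v2) (h12 : G.Adj v1 v2) :
    ¬ G.Colorable 2 := by
  rintro ⟨C⟩
  have e01 := Fin.val_ne_iff.mpr (C.valid h01)
  have e02 := Fin.val_ne_iff.mpr (C.valid h02)
  have e12 := Fin.val_ne_iff.mpr (C.valid h12)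
  have b0 := (C v0).isLt; have b1 := (C v1).isLt; have b2 := (C v2).isLt
  omega

lemma chromNum_eq_succ {V : Type*} (G : SimpleGraph V) (k : ℕ)
    (h1 : G.Colorable (k+1)) (h2 : ¬ G.Colorable k) : chromNum G = k+1 := by
  unfold chromNum
  refine le_antisymm (Nat.sInf_le (show k+1 ∈ {n | G.Colorable n} from h1)) ?_
  by_contra h
  push_neg at h
  have hne : {n : ℕ | G.Colorable n}.Nonempty := ⟨k+1, h1⟩
  have hm := Nat.sInf_mem hne
  exact h2 ((show G.Colorable (sInf {n | G.Colorable n}) from hm).mono (by omega))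

lemma colorable_of_chromNum_eq {V : Type*} (G : SimpleGraph V) (k : ℕ)
    (hk : k ≠ 0) (h : chromNum G = k) : G.Colorable k := by
  unfold chromNum at h
  have hne : {n : ℕ | G.Colorable n}.Nonempty := by
    by_contra hn
    rw [Set.not_nonempty_iff_eq_empty] at hn
    rw [hn, Nat.sInf_empty] at h
    exact hk h.symm
  have := Nat.sInf_mem hne
  rwa [h] at this

def TT (m : ℕ) : Finset (Fin (4*m+4)) :=
  insert ⟨0, by omega⟩
    ((Finset.range m).attach.image fun j =>
      (⟨4+2*m+2*j.1, by have := Finset.mem_range.mp j.2; omega⟩ : Fin (4*m+4)))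

lemma mem_TT (m : ℕ) (u : Fin (4*m+4)) :
    u ∈ TT m ↔ u.val = 0 ∨ (4+2*m ≤ u.val ∧ u.val % 2 = 0) := by
  unfold TT
  simp only [Finset.mem_insert, Finset.mem_image, Finset.mem_attach, true_and,
    Subtype.exists, Finset.mem_range, Fin.ext_iff]
  constructor
  · rintro (h | ⟨j, hj, h⟩)
    · left; omega
    · right; omega
  · have hu := u.isLt
    rintro (h | ⟨h1, h2⟩)
    · left; omega
    · right; exact ⟨(u.val - 4 - 2*m)/2, by omega, by omega⟩

lemma card_TT (m : ℕ) : (TT m).card = m + 1 := by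
  unfold TT
  rw [Finset.card_insert_of_notMem, Finset.card_image_of_injective,
    Finset.card_attach, Finset.card_range]
  · intro x y h
    have := congrArg Fin.val h
    simp only at this
    exact Subtype.ext (by omega)
  · simp only [Finset.mem_image, Finset.mem_attach, true_and, Subtype.exists,
      Finset.mem_range, Fin.ext_iff]
    rintro ⟨j, hj, h⟩
    omega

/-- For every natural number $r$ there exists a finite simple graph $G$ with at
least one edge such that $ivs_χ(G) > r · vs_χ(G)$. -/
theorem stmt_9 (r : ℕ) :
    ∃ (n : ℕ) (G : SimpleGraph (Fin n)),
      G.edgeSet.Nonempty ∧ ivsChi G > r * vsChi G := by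
  refine ⟨4*(2*r+1)+4, gG (2*r+1), ?_, ?_⟩
  · exact ⟨s(⟨0, by omega⟩, ⟨1, by omega⟩),
      (SimpleGraph.mem_edgeSet _).mpr (gG_adj_mk (by omega) (by omega) (by omega) (by unfold gP; omega))⟩
  -- chromatic number of G is 4
  have hχ : chromNum (gG (2*r+1)) = 4 := by
    refine chromNum_eq_succ _ 3 ?_ ?_
    · refine colorable_of_fun _ 4
        (fun v => if v.val < 4 then v.val
          else if (v.val-4)/2 < 2*r+1 then 2 + v.val % 2 else v.val % 2)
        (fun v => by split_ifs <;> omega) ?_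
      rintro u v ⟨h1, h2⟩
      try simp only [Function.Embedding.coe_subtype] at h1
      try simp only [Function.Embedding.coe_subtype] at h2
      unfold gP at h2
      split_ifs <;> omega
    · exact no_col3 (G := gG (2*r+1))
        (v0 := ⟨0, by omega⟩) (v1 := ⟨1, by omega⟩)
        (v2 := ⟨2, by omega⟩) (v3 := ⟨3, by omega⟩)
        (gG_adj_mk (by omega) (by omega) (by omega) (by unfold gP; omega)) (gG_adj_mk (by omega) (by omega) (by omega) (by unfold gP; omega))
        (gG_adj_mk (by omega) (by omega) (by omega) (by unfold gP; omega)) (gG_adj_mk (by omega) (by omega) (by omega) (by unfold gP; omega))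
        (gG_adj_mk (by omega) (by omega) (by omega) (by unfold gP; omega)) (gG_adj_mk (by omega) (by omega) (by omega) (by unfold gP; omega))
  -- the vs witness S2 = {0, 2}
  set S2 : Finset (Fin (4*(2*r+1)+4)) := {⟨0, by omega⟩, ⟨2, by omega⟩} with hS2def
  have hmemS2 : ∀ u : Fin (4*(2*r+1)+4), u ∈ S2 ↔ (u.val = 0 ∨ u.val = 2) := by
    intro u
    simp only [hS2def, Finset.mem_insert, Finset.mem_singleton, Fin.ext_iff, Fin.val_mk]
  have hS2card : S2.card = 2 := Finset.card_pair (by simp [Fin.ext_iff])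
  have hS2chrom : chromNum ((gG (2*r+1)).induce ((S2 : Set (Fin (4*(2*r+1)+4))))ᶜ) = 3 := by
    refine chromNum_eq_succ _ 2 ?_ ?_
    · refine colorable_of_fun _ 3
        (fun v => if v.1.val = 1 then 0 else if v.1.val = 3 then 1
          else if (v.1.val-4)/2 < 2*r+1 then 1 + v.1.val % 2 else 2*(v.1.val % 2))
        (fun v => by split_ifs <;> omega) ?_
      rintro u v ⟨h1, h2⟩
      try simp only [Function.Embedding.coe_subtype] at h1
      try simp only [Function.Embedding.coe_subtype] at h2
      have hu : ¬(u.1.val = 0 ∨ u.1.val = 2) := by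
        have := u.2
        simp only [Set.mem_compl_iff, Finset.mem_coe, hmemS2] at this
        exact this
      have hv : ¬(v.1.val = 0 ∨ v.1.val = 2) := by
        have := v.2
        simp only [Set.mem_compl_iff, Finset.mem_coe, hmemS2] at this
        exact this
      unfold gP at h2
      split_ifs <;> omega
    · refine no_col2
        (v0 := ⟨⟨1, by omega⟩, by simp [Set.mem_compl_iff, hmemS2]⟩)
        (v1 := ⟨⟨4, by omega⟩, by simp [Set.mem_compl_iff, hmemS2]⟩)
        (v2 := ⟨⟨5, by omega⟩, by simp [Set.mem_compl_iff, hmemS2]⟩)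
        (gG_adj_mk (by omega) (by omega) (by omega) (by unfold gP; omega)) (gG_adj_mk (by omega) (by omega) (by omega) (by unfold gP; omega))
        (gG_adj_mk (by omega) (by omega) (by omega) (by unfold gP; omega))
  have hvs2 : vsChi (gG (2*r+1)) ≤ 2 := by
    unfold vsChi
    exact Nat.sInf_le ⟨S2, hS2card, by rw [hχ]; exact hS2chrom⟩
  -- the ivs witness TT
  have hTind : ∀ u ∈ TT (2*r+1), ∀ v ∈ TT (2*r+1), ¬ (gG (2*r+1)).Adj u v := by
    intro u hu v hv hadj
    rw [mem_TT] at hu hv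
    obtain ⟨h1, h2⟩ := hadj
    unfold gP at h2
    have := u.isLt
    have := v.isLt
    omega
  have hTchrom : chromNum ((gG (2*r+1)).induce ((TT (2*r+1) : Set (Fin (4*(2*r+1)+4))))ᶜ) = 3 := by
    refine chromNum_eq_succ _ 2 ?_ ?_
    · refine colorable_of_fun _ 3
        (fun v => if v.1.val < 4 then v.1.val - 1
          else if (v.1.val-4)/2 < 2*r+1 then 1 + v.1.val % 2 else 0)
        (fun v => by split_ifs <;> omega) ?_
      rintro u v ⟨h1, h2⟩
      try simp only [Function.Embedding.coe_subtype] at h1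
      try simp only [Function.Embedding.coe_subtype] at h2
      have hu : ¬(u.1.val = 0 ∨ (4+2*(2*r+1) ≤ u.1.val ∧ u.1.val % 2 = 0)) := by
        have := u.2
        simp only [Set.mem_compl_iff, Finset.mem_coe, mem_TT] at this
        exact this
      have hv : ¬(v.1.val = 0 ∨ (4+2*(2*r+1) ≤ v.1.val ∧ v.1.val % 2 = 0)) := by
        have := v.2
        simp only [Set.mem_compl_iff, Finset.mem_coe, mem_TT] at this
        exact this
      unfold gP at h2
      split_ifs <;> omega
    · refine no_col2
        (v0 := ⟨⟨1, by omega⟩, by simp [Set.mem_compl_iff, mem_TT]⟩)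
        (v1 := ⟨⟨4, by omega⟩, by simp [Set.mem_compl_iff, mem_TT]⟩)
        (v2 := ⟨⟨5, by omega⟩, by simp [Set.mem_compl_iff, mem_TT]⟩)
        (gG_adj_mk (by omega) (by omega) (by omega) (by unfold gP; omega)) (gG_adj_mk (by omega) (by omega) (by omega) (by unfold gP; omega))
        (gG_adj_mk (by omega) (by omega) (by omega) (by unfold gP; omega))
  -- lower bound for the ivs set
  have hlow : ∀ k ∈ {k : ℕ | ∃ S : Finset (Fin (4*(2*r+1)+4)), S.card = k ∧
      (∀ u ∈ S, ∀ v ∈ S, ¬ (gG (2*r+1)).Adj u v) ∧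
      chromNum ((gG (2*r+1)).induce ((S : Set (Fin (4*(2*r+1)+4))))ᶜ) = chromNum (gG (2*r+1)) - 1},
      2*r+1 ≤ k := by
    rintro k ⟨S, hScard, hSind, hSchrom⟩
    by_contra hlt
    push_neg at hlt
    rw [hχ] at hSchrom
    have hcol3 : ((gG (2*r+1)).induce ((S : Set (Fin (4*(2*r+1)+4))))ᶜ).Colorable 3 :=
      colorable_of_chromNum_eq _ 3 (by omega) (by simpa using hSchrom)
    have pigeon : ∀ off : ℕ,
        (∀ j, j < 2*r+1 → ∃ u ∈ S, u.val = 4+2*off+2*j ∨ u.val = 5+2*off+2*j) → False := by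
      intro off hcov
      have hsub : Finset.range (2*r+1) ⊆ S.image (fun u => (u.val - 4 - 2*off)/2) := by
        intro j hj
        obtain ⟨u, huS, hu⟩ := hcov j (Finset.mem_range.mp hj)
        exact Finset.mem_image.mpr ⟨u, huS, by omega⟩
      have h1 := Finset.card_le_card hsub
      have h2 := Finset.card_image_le (s := S) (f := fun u => (u.val - 4 - 2*off)/2)
      rw [Finset.card_range] at h1
      omega
    -- helper: a surviving 4-clique gives a contradiction
    have hK4 : ∀ a b c d : Fin (4*(2*r+1)+4),
        a ∉ S → b ∉ S → c ∉ S → d ∉ S →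
        (gG (2*r+1)).Adj a b → (gG (2*r+1)).Adj a c → (gG (2*r+1)).Adj a d →
        (gG (2*r+1)).Adj b c → (gG (2*r+1)).Adj b d → (gG (2*r+1)).Adj c d → False := by
      intro a b c d ha hb hc hd hab hac had hbc hbd hcd
      exact no_col3 (G := (gG (2*r+1)).induce ((S : Set (Fin (4*(2*r+1)+4))))ᶜ)
        (v0 := ⟨a, ha⟩) (v1 := ⟨b, hb⟩) (v2 := ⟨c, hc⟩) (v3 := ⟨d, hd⟩)
        hab hac had hbc hbd hcd hcol3
    have hsideA : ∀ w : Fin (4*(2*r+1)+4), w ∈ S → (w.val = 2 ∨ w.val = 3) → False := by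
      intro w hwS hw23
      have h0 : (⟨0, by omega⟩ : Fin (4*(2*r+1)+4)) ∉ S :=
        fun h => hSind w hwS _ h (gG_adj_mk (by omega) (by omega) (by omega) (by unfold gP; omega))
      have h1 : (⟨1, by omega⟩ : Fin (4*(2*r+1)+4)) ∉ S :=
        fun h => hSind w hwS _ h (gG_adj_mk (by omega) (by omega) (by omega) (by unfold gP; omega))
      have hunc : ∃ j, j < 2*r+1 ∧ ∀ u ∈ S, ¬(u.val = 4+2*0+2*j ∨ u.val = 5+2*0+2*j) := by
        by_contra hcon
        push_neg at hcon
        exact pigeon 0 (fun j hj => hcon j hj)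
      obtain ⟨j, hj, hfree⟩ := hunc
      have hp : (⟨4+2*0+2*j, by omega⟩ : Fin (4*(2*r+1)+4)) ∉ S :=
        fun h => hfree _ h (Or.inl rfl)
      have hq : (⟨5+2*0+2*j, by omega⟩ : Fin (4*(2*r+1)+4)) ∉ S :=
        fun h => hfree _ h (Or.inr rfl)
      exact hK4 _ _ _ _ h0 h1 hp hq
        (gG_adj_mk (by omega) (by omega) (by omega) (by unfold gP; omega)) (gG_adj_mk (by omega) (by omega) (by omega) (by unfold gP; omega))
        (gG_adj_mk (by omega) (by omega) (by omega) (by unfold gP; omega)) (gG_adj_mk (by omega) (by omega) (by omega) (by unfold gP; omega))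
        (gG_adj_mk (by omega) (by omega) (by omega) (by unfold gP; omega)) (gG_adj_mk (by omega) (by omega) (by omega) (by unfold gP; omega))
    by_cases h2S : (⟨2, by omega⟩ : Fin (4*(2*r+1)+4)) ∈ S
    · exact hsideA _ h2S (Or.inl rfl)
    by_cases h3S : (⟨3, by omega⟩ : Fin (4*(2*r+1)+4)) ∈ S
    · exact hsideA _ h3S (Or.inr rfl)
    -- both hubs 2, 3 survive; find a surviving B gadget
    have hunc : ∃ j, j < 2*r+1 ∧
        ∀ u ∈ S, ¬(u.val = 4+2*(2*r+1)+2*j ∨ u.val = 5+2*(2*r+1)+2*j) := by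
      by_contra hcon
      push_neg at hcon
      exact pigeon (2*r+1) (fun j hj => hcon j hj)
    obtain ⟨j, hj, hfree⟩ := hunc
    have hp : (⟨4+2*(2*r+1)+2*j, by omega⟩ : Fin (4*(2*r+1)+4)) ∉ S :=
      fun h => hfree _ h (Or.inl rfl)
    have hq : (⟨5+2*(2*r+1)+2*j, by omega⟩ : Fin (4*(2*r+1)+4)) ∉ S :=
      fun h => hfree _ h (Or.inr rfl)
    exact hK4 _ _ _ _ h2S h3S hp hq
      (gG_adj_mk (by omega) (by omega) (by omega) (by unfold gP; omega)) (gG_adj_mk (by omega) (by omega) (by omega) (by unfold gP; omega))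
      (gG_adj_mk (by omega) (by omega) (by omega) (by unfold gP; omega)) (gG_adj_mk (by omega) (by omega) (by omega) (by unfold gP; omega))
      (gG_adj_mk (by omega) (by omega) (by omega) (by unfold gP; omega)) (gG_adj_mk (by omega) (by omega) (by omega) (by unfold gP; omega))
  -- assemble
  have hivs : 2*r+1 ≤ ivsChi (gG (2*r+1)) := by
    unfold ivsChi
    have hne : {k : ℕ | ∃ S : Finset (Fin (4*(2*r+1)+4)), S.card = k ∧
        (∀ u ∈ S, ∀ v ∈ S, ¬ (gG (2*r+1)).Adj u v) ∧
        chromNum ((gG (2*r+1)).induce ((S : Set (Fin (4*(2*r+1)+4))))ᶜ) = chromNum (gG (2*r+1)) - 1}.Nonempty :=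
      ⟨2*r+1+1, TT (2*r+1), card_TT (2*r+1), hTind, by rw [hχ]; exact hTchrom⟩
    exact hlow _ (Nat.sInf_mem hne)
  have hmul : r * vsChi (gG (2*r+1)) ≤ r * 2 := Nat.mul_le_mul le_rfl hvs2
  omega
end

section
/- For every natural number k ≥ 1 there exists a finite simple graph G with χ(G) = 3, vs_χ(G) = 2, and ivs_χ(G) = k + 1. -/
open SimpleGraph

namespace Stmt10
variable (k : ℕ)

abbrev N : ℕ := 4*k+2

def u : Fin (N k) := ⟨0, by simp only [N]; omega⟩
def v : Fin (N k) := ⟨1, by simp only [N]; omega⟩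
def p (i : Fin k) : Fin (N k) := ⟨4*i+2, by have := i.isLt; simp only [N]; omega⟩
def q (i : Fin k) : Fin (N k) := ⟨4*i+3, by have := i.isLt; simp only [N]; omega⟩
def x (i : Fin k) : Fin (N k) := ⟨4*i+4, by have := i.isLt; simp only [N]; omega⟩
def y (i : Fin k) : Fin (N k) := ⟨4*i+5, by have := i.isLt; simp only [N]; omega⟩

def R (a b : Fin (N k)) : Prop :=
  (a = u k ∧ b = v k) ∨ ∃ i : Fin k,
    (a = u k ∧ b = p k i) ∨ (a = u k ∧ b = q k i) ∨ (a = p k i ∧ b = q k i) ∨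
    (a = v k ∧ b = p k i) ∨ (a = v k ∧ b = x k i) ∨ (a = v k ∧ b = y k i) ∨
    (a = x k i ∧ b = y k i)

def G : SimpleGraph (Fin (N k)) := SimpleGraph.fromRel (R k)

variable {k}

lemma adj_uv : (G k).Adj (u k) (v k) := by
  rw [G, SimpleGraph.fromRel_adj]
  exact ⟨by simp only [u, v, p, q, x, y, ne_eq, Fin.mk.injEq]; omega, Or.inl (Or.inl ⟨rfl, rfl⟩)⟩

lemma adj_up (i : Fin k) : (G k).Adj (u k) (p k i) := by
  rw [G, SimpleGraph.fromRel_adj]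
  exact ⟨by simp only [u, v, p, q, x, y, ne_eq, Fin.mk.injEq]; omega, Or.inl (Or.inr ⟨i, Or.inl ⟨rfl, rfl⟩⟩)⟩

lemma adj_uq (i : Fin k) : (G k).Adj (u k) (q k i) := by
  rw [G, SimpleGraph.fromRel_adj]
  exact ⟨by simp only [u, v, p, q, x, y, ne_eq, Fin.mk.injEq]; omega, Or.inl (Or.inr ⟨i, Or.inr (Or.inl ⟨rfl, rfl⟩)⟩)⟩

lemma adj_pq (i : Fin k) : (G k).Adj (p k i) (q k i) := by
  rw [G, SimpleGraph.fromRel_adj]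
  exact ⟨by simp only [u, v, p, q, x, y, ne_eq, Fin.mk.injEq]; omega,
    Or.inl (Or.inr ⟨i, Or.inr (Or.inr (Or.inl ⟨rfl, rfl⟩))⟩)⟩

lemma adj_vp (i : Fin k) : (G k).Adj (v k) (p k i) := by
  rw [G, SimpleGraph.fromRel_adj]
  exact ⟨by simp only [u, v, p, q, x, y, ne_eq, Fin.mk.injEq]; omega,
    Or.inl (Or.inr ⟨i, Or.inr (Or.inr (Or.inr (Or.inl ⟨rfl, rfl⟩)))⟩)⟩

lemma adj_vx (i : Fin k) : (G k).Adj (v k) (x k i) := by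
  rw [G, SimpleGraph.fromRel_adj]
  exact ⟨by simp only [u, v, p, q, x, y, ne_eq, Fin.mk.injEq]; omega,
    Or.inl (Or.inr ⟨i, Or.inr (Or.inr (Or.inr (Or.inr (Or.inl ⟨rfl, rfl⟩))))⟩)⟩

lemma adj_vy (i : Fin k) : (G k).Adj (v k) (y k i) := by
  rw [G, SimpleGraph.fromRel_adj]
  exact ⟨by simp only [u, v, p, q, x, y, ne_eq, Fin.mk.injEq]; omega,
    Or.inl (Or.inr ⟨i, Or.inr (Or.inr (Or.inr (Or.inr (Or.inr (Or.inl ⟨rfl, rfl⟩)))))⟩)⟩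

lemma adj_xy (i : Fin k) : (G k).Adj (x k i) (y k i) := by
  rw [G, SimpleGraph.fromRel_adj]
  exact ⟨by simp only [u, v, p, q, x, y, ne_eq, Fin.mk.injEq]; omega,
    Or.inl (Or.inr ⟨i, Or.inr (Or.inr (Or.inr (Or.inr (Or.inr (Or.inr ⟨rfl, rfl⟩)))))⟩)⟩

end Stmt10

section Helpers
variable {W : Type*} (H : SimpleGraph W)

lemma not_colorable_one_of_edge {a b : W} (h : H.Adj a b) : ¬ H.Colorable 1 := by
  rintro ⟨C⟩
  exact C.valid h (Subsingleton.elim _ _)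

lemma not_colorable_two_of_triangle {a b c : W} (hab : H.Adj a b) (hac : H.Adj a c)
    (hbc : H.Adj b c) : ¬ H.Colorable 2 := by
  rintro ⟨C⟩
  have h1 : C a ≠ C b := C.valid hab
  have h2 : C a ≠ C c := C.valid hac
  have h3 : C b ≠ C c := C.valid hbc
  have e1 : (C a).val ≠ (C b).val := fun h => h1 (Fin.val_injective h)
  have e2 : (C a).val ≠ (C c).val := fun h => h2 (Fin.val_injective h)
  have e3 : (C b).val ≠ (C c).val := fun h => h3 (Fin.val_injective h)
  have := (C a).isLt; have := (C b).isLt; have := (C c).isLt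
  omega

lemma chromNum_eq {n : ℕ} (h1 : H.Colorable n) (h2 : ∀ m < n, ¬ H.Colorable m) :
    chromNum H = n :=
  le_antisymm (Nat.sInf_le h1)
    (le_csInf ⟨n, h1⟩ fun m hm => not_lt.1 fun h => h2 m h hm)

lemma chromNum_eq_two {a b : W} (hcol : H.Colorable 2) (h : H.Adj a b) :
    chromNum H = 2 :=
  chromNum_eq H hcol fun m hm hc =>
    not_colorable_one_of_edge H h (hc.mono (by omega))

lemma chromNum_eq_three {a b c : W} (hcol : H.Colorable 3) (hab : H.Adj a b)
    (hac : H.Adj a c) (hbc : H.Adj b c) : chromNum H = 3 :=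
  chromNum_eq H hcol fun m hm hc =>
    not_colorable_two_of_triangle H hab hac hbc (hc.mono (by omega))

lemma chromNum_ne_two_of_triangle [Finite W] {a b c : W} (hab : H.Adj a b) (hac : H.Adj a c)
    (hbc : H.Adj b c) : chromNum H ≠ 2 := by
  intro h
  have : Fintype W := Fintype.ofFinite W
  have hne : {n : ℕ | H.Colorable n}.Nonempty := ⟨Fintype.card W, H.colorable_of_fintype⟩
  have h2 : H.Colorable 2 := by
    have := Nat.sInf_mem hne
    rwa [show sInf {n : ℕ | H.Colorable n} = 2 from h] at this
  exact not_colorable_two_of_triangle H hab hac hbc h2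

end Helpers

namespace Stmt10
variable {k : ℕ}

def col3 (a : Fin (N k)) : Fin 3 :=
  if a.val = 0 then 0 else if a.val = 1 then 1
  else if a.val % 4 = 2 then 2 else if a.val % 4 = 3 then 1
  else if a.val % 4 = 0 then 0 else 2

lemma col3_u : col3 (u k) = 0 := by simp [col3, u]
lemma col3_v : col3 (v k) = 1 := by simp [col3, v]
lemma col3_p (i : Fin k) : col3 (p k i) = 2 := by
  unfold col3; rw [show (p k i).val = 4*i+2 from rfl]
  rw [if_neg (by omega), if_neg (by omega), if_pos (by omega)]
lemma col3_q (i : Fin k) : col3 (q k i) = 1 := by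
  unfold col3; rw [show (q k i).val = 4*i+3 from rfl]
  rw [if_neg (by omega), if_neg (by omega), if_neg (by omega), if_pos (by omega)]
lemma col3_x (i : Fin k) : col3 (x k i) = 0 := by
  unfold col3; rw [show (x k i).val = 4*i+4 from rfl]
  rw [if_neg (by omega), if_neg (by omega), if_neg (by omega), if_neg (by omega),
    if_pos (by omega)]
lemma col3_y (i : Fin k) : col3 (y k i) = 2 := by
  unfold col3; rw [show (y k i).val = 4*i+5 from rfl]
  rw [if_neg (by omega), if_neg (by omega), if_neg (by omega), if_neg (by omega),
    if_neg (by omega)]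

lemma col3_valid {a b : Fin (N k)} (h : R k a b) : col3 a ≠ col3 b := by
  rcases h with ⟨rfl, rfl⟩ | ⟨i, ⟨rfl, rfl⟩ | ⟨rfl, rfl⟩ | ⟨rfl, rfl⟩ | ⟨rfl, rfl⟩ |
    ⟨rfl, rfl⟩ | ⟨rfl, rfl⟩ | ⟨rfl, rfl⟩⟩ <;>
    simp [col3_u, col3_v, col3_p, col3_q, col3_x, col3_y]

lemma colorable3 : (G k).Colorable 3 := by
  refine ⟨SimpleGraph.Coloring.mk col3 ?_⟩
  intro a b hab
  rw [G, SimpleGraph.fromRel_adj] at hab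
  obtain ⟨-, h | h⟩ := hab
  · exact col3_valid h
  · exact (col3_valid h).symm

lemma chromNum_G (hk : 1 ≤ k) : chromNum (G k) = 3 := by
  have i0 : Fin k := ⟨0, hk⟩
  exact chromNum_eq_three _ colorable3 (adj_up i0) (adj_uq i0) (adj_pq i0)

end Stmt10

namespace Stmt10
variable {k : ℕ}

open Finset in
lemma card_le_of_blocked (S : Finset (Fin (N k))) (f g : Fin k → Fin (N k))
    (hinj : ∀ i j : Fin k, (f i = f j ∨ f i = g j ∨ g i = g j) → i = j)
    (hblock : ∀ i, f i ∈ S ∨ g i ∈ S) : k ≤ S.card := by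
  classical
  set c : Fin k → Fin (N k) := fun i => if f i ∈ S then f i else g i with hc
  have hmem : ∀ i ∈ (univ : Finset (Fin k)), c i ∈ S := by
    intro i _
    by_cases h : f i ∈ S
    · simp [hc, h]
    · simpa [hc, h] using (hblock i).resolve_left h
  have hinj' : Set.InjOn c (univ : Finset (Fin k)) := by
    intro i _ j _ hij
    simp only [hc] at hij
    split_ifs at hij with h1 h2 h2
    · exact hinj i j (Or.inl hij)
    · exact hinj i j (Or.inr (Or.inl hij))
    · exact (hinj j i (Or.inr (Or.inl hij.symm))).symm
    · exact hinj i j (Or.inr (Or.inr hij))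
  simpa using Finset.card_le_card_of_injOn c hmem hinj'

lemma hinj_xy : ∀ i j : Fin k,
    (x k i = x k j ∨ x k i = y k j ∨ y k i = y k j) → i = j := by
  intro i j h
  have := i.isLt; have := j.isLt
  rcases h with h | h | h <;>
    (simp only [x, y, Fin.mk.injEq] at h; exact Fin.ext (by omega))

lemma hinj_pq : ∀ i j : Fin k,
    (p k i = p k j ∨ p k i = q k j ∨ q k i = q k j) → i = j := by
  intro i j h
  rcases h with h | h | h <;>
    (simp only [p, q, Fin.mk.injEq] at h; exact Fin.ext (by omega))

lemma triangle_survives (hk : 1 ≤ k) (S : Finset (Fin (N k))) (hcard : S.card ≤ k)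
    (hind : ∀ a ∈ S, ∀ b ∈ S, ¬ (G k).Adj a b) :
    ∃ a b c : Fin (N k), a ∉ S ∧ b ∉ S ∧ c ∉ S ∧
      (G k).Adj a b ∧ (G k).Adj a c ∧ (G k).Adj b c := by
  classical
  by_cases hu : u k ∈ S
  · have hv : v k ∉ S := fun hv => hind _ hu _ hv adj_uv
    have hfree : ∃ i, x k i ∉ S ∧ y k i ∉ S := by
      by_contra h
      push_neg at h
      have hb : ∀ i, x k i ∈ S.erase (u k) ∨ y k i ∈ S.erase (u k) := by
        intro i
        by_cases hx : x k i ∈ S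
        · left
          exact Finset.mem_erase.2 ⟨by simp only [x, u, ne_eq, Fin.mk.injEq]; omega, hx⟩
        · right
          exact Finset.mem_erase.2 ⟨by simp only [y, u, ne_eq, Fin.mk.injEq]; omega, h i hx⟩
      have := card_le_of_blocked (S.erase (u k)) _ _ hinj_xy hb
      rw [Finset.card_erase_of_mem hu] at this
      omega
    obtain ⟨i, hx, hy⟩ := hfree
    exact ⟨v k, x k i, y k i, hv, hx, hy, adj_vx i, adj_vy i, adj_xy i⟩
  · by_cases hv : v k ∈ S
    · have hp : ∀ i, p k i ∉ S := fun i hpi => hind _ hv _ hpi (adj_vp i)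
      have hfree : ∃ i, q k i ∉ S := by
        by_contra h
        push_neg at h
        have hb : ∀ i, q k i ∈ S.erase (v k) ∨ q k i ∈ S.erase (v k) := by
          intro i
          left
          exact Finset.mem_erase.2 ⟨by simp only [q, v, ne_eq, Fin.mk.injEq]; omega, h i⟩
        have := card_le_of_blocked (S.erase (v k)) (q k) (q k)
          (fun i j hij => hinj_pq i j (by tauto)) hb
        rw [Finset.card_erase_of_mem hv] at this
        omega
      obtain ⟨i, hq⟩ := hfree
      exact ⟨u k, p k i, q k i, hu, hp i, hq, adj_up i, adj_uq i, adj_pq i⟩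
    · have hfree : (∃ i, p k i ∉ S ∧ q k i ∉ S) ∨ (∃ i, x k i ∉ S ∧ y k i ∉ S) := by
        by_contra h
        push_neg at h
        obtain ⟨h1, h2⟩ := h
        set S1 := S.filter (fun a => 2 ≤ a.val % 4) with hS1
        set S2 := S.filter (fun a => ¬ 2 ≤ a.val % 4) with hS2
        have k1 : k ≤ S1.card := by
          apply card_le_of_blocked S1 (p k) (q k) hinj_pq
          intro i
          by_cases hp : p k i ∈ S
          · exact Or.inl (Finset.mem_filter.2 ⟨hp, by simp only [p]; omega⟩)
          · exact Or.inr (Finset.mem_filter.2 ⟨h1 i hp, by simp only [q]; omega⟩)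
        have k2 : k ≤ S2.card := by
          apply card_le_of_blocked S2 (x k) (y k) hinj_xy
          intro i
          by_cases hx : x k i ∈ S
          · exact Or.inl (Finset.mem_filter.2 ⟨hx, by simp only [x]; omega⟩)
          · exact Or.inr (Finset.mem_filter.2 ⟨h2 i hx, by simp only [y]; omega⟩)
        have hdisj : Disjoint S1 S2 := Finset.disjoint_filter_filter_not S S _
        have hsub : S1 ∪ S2 ⊆ S :=
          Finset.union_subset (Finset.filter_subset _ _) (Finset.filter_subset _ _)
        have := Finset.card_le_card hsub
        rw [Finset.card_union_of_disjoint hdisj] at this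
        omega
      rcases hfree with ⟨i, hpi, hqi⟩ | ⟨i, hxi, hyi⟩
      · exact ⟨u k, p k i, q k i, hu, hpi, hqi, adj_up i, adj_uq i, adj_pq i⟩
      · exact ⟨v k, x k i, y k i, hv, hxi, hyi, adj_vx i, adj_vy i, adj_xy i⟩

end Stmt10

namespace Stmt10
variable {k : ℕ}

def col2 (a : Fin (N k)) : Fin 2 := ⟨a.val % 2, by omega⟩

lemma col2_pq (i : Fin k) : col2 (p k i) ≠ col2 (q k i) := by
  simp only [col2, p, q, ne_eq, Fin.mk.injEq]; omega

lemma col2_xy (i : Fin k) : col2 (x k i) ≠ col2 (y k i) := by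
  simp only [col2, x, y, ne_eq, Fin.mk.injEq]; omega

/-- validity of the parity coloring away from u,v -/
lemma col2_valid {a b : Fin (N k)} (h : (G k).Adj a b)
    (ha1 : a ≠ u k) (ha2 : a ≠ v k) (hb1 : b ≠ u k) (hb2 : b ≠ v k) :
    col2 a ≠ col2 b := by
  rw [G, SimpleGraph.fromRel_adj] at h
  obtain ⟨hne, h | h⟩ := h <;>
  rcases h with ⟨h1, h2⟩ | ⟨i, ⟨h1, h2⟩ | ⟨h1, h2⟩ | ⟨h1, h2⟩ | ⟨h1, h2⟩ | ⟨h1, h2⟩ |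
    ⟨h1, h2⟩ | ⟨h1, h2⟩⟩ <;>
  first
    | exact absurd h1 ha1 | exact absurd h1 ha2 | exact absurd h1 hb1 | exact absurd h1 hb2
    | (subst h1; subst h2; first
        | exact col2_pq i | exact col2_xy i | exact (col2_pq i).symm | exact (col2_xy i).symm)

def col2' (a : Fin (N k)) : Fin 2 := if a.val % 4 = 2 then 1 else ⟨a.val % 2, by omega⟩

lemma col2'_u : col2' (u k) = 0 := by simp [col2', u]
lemma col2'_p (i : Fin k) : col2' (p k i) = 1 := by
  unfold col2'; rw [if_pos (show (p k i).val % 4 = 2 by simp only [p]; omega)]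
lemma col2'_x (i : Fin k) : col2' (x k i) = 0 := by
  unfold col2'; rw [if_neg (show ¬ (x k i).val % 4 = 2 by simp only [x]; omega)]
  simp only [Fin.ext_iff, x]; omega
lemma col2'_y (i : Fin k) : col2' (y k i) = 1 := by
  unfold col2'; rw [if_neg (show ¬ (y k i).val % 4 = 2 by simp only [y]; omega)]
  simp only [Fin.ext_iff, y]; omega

/-- validity of the second coloring away from v and all the q i -/
lemma col2'_valid {a b : Fin (N k)} (h : (G k).Adj a b)
    (ha1 : a ≠ v k) (ha2 : ∀ i, a ≠ q k i) (hb1 : b ≠ v k) (hb2 : ∀ i, b ≠ q k i) :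
    col2' a ≠ col2' b := by
  rw [G, SimpleGraph.fromRel_adj] at h
  obtain ⟨hne, h | h⟩ := h <;>
  rcases h with ⟨h1, h2⟩ | ⟨i, ⟨h1, h2⟩ | ⟨h1, h2⟩ | ⟨h1, h2⟩ | ⟨h1, h2⟩ | ⟨h1, h2⟩ |
    ⟨h1, h2⟩ | ⟨h1, h2⟩⟩ <;>
  first
    | exact absurd h1 ha1 | exact absurd h1 hb1
    | exact absurd h2 ha1 | exact absurd h2 hb1
    | exact absurd h1 (ha2 i) | exact absurd h1 (hb2 i)
    | exact absurd h2 (ha2 i) | exact absurd h2 (hb2 i)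
    | (subst h1; subst h2; first
        | (rw [col2'_u, col2'_p i]; decide) | (rw [col2'_p i, col2'_u]; decide)
        | (rw [col2'_x i, col2'_y i]; decide) | (rw [col2'_y i, col2'_x i]; decide))

end Stmt10

namespace Stmt10
variable {k : ℕ}

lemma mem_compl_coe {S : Finset (Fin (N k))} {a : Fin (N k)} (h : a ∉ S) :
    a ∈ ((S : Set (Fin (N k))))ᶜ := by simpa using h

lemma induce_adj_of_adj {S : Finset (Fin (N k))}
    {a b : ↥((S : Set (Fin (N k)))ᶜ)} (h : (G k).Adj a.1 b.1) :
    ((G k).induce ((S : Set (Fin (N k)))ᶜ)).Adj a b := by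
  simpa using h

lemma chromNum_induce_ne_two {S : Finset (Fin (N k))} {a b c : Fin (N k)}
    (ha : a ∉ S) (hb : b ∉ S) (hc : c ∉ S)
    (hab : (G k).Adj a b) (hac : (G k).Adj a c) (hbc : (G k).Adj b c) :
    chromNum ((G k).induce ((S : Set (Fin (N k)))ᶜ)) ≠ 2 := by
  refine chromNum_ne_two_of_triangle _
    (a := ⟨a, mem_compl_coe ha⟩) (b := ⟨b, mem_compl_coe hb⟩) (c := ⟨c, mem_compl_coe hc⟩)
    (induce_adj_of_adj hab) (induce_adj_of_adj hac) (induce_adj_of_adj hbc)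

lemma ne_of_val_ne' {a b : Fin (N k)} (h : a.val ≠ b.val) : a ≠ b := fun hh => h (by rw [hh])

/-- small deletion sets (size ≤ 1) leave a triangle -/
lemma triangle_survives_one (hk : 1 ≤ k) (S : Finset (Fin (N k))) (hcard : S.card ≤ 1) :
    ∃ a b c : Fin (N k), a ∉ S ∧ b ∉ S ∧ c ∉ S ∧
      (G k).Adj a b ∧ (G k).Adj a c ∧ (G k).Adj b c := by
  classical
  set i0 : Fin k := ⟨0, hk⟩ with hi0
  have pair : ∀ w z : Fin (N k), w ∈ S → z ∈ S → w ≠ z → False := by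
    intro w z hw hz hne
    have := Finset.one_lt_card.2 ⟨w, hw, z, hz, hne⟩
    omega
  by_cases h : u k ∈ S ∨ p k i0 ∈ S ∨ q k i0 ∈ S
  · obtain ⟨w, hw, hwp⟩ : ∃ w, w ∈ S ∧ (w = u k ∨ w = p k i0 ∨ w = q k i0) := by
      rcases h with h | h | h
      exacts [⟨_, h, Or.inl rfl⟩, ⟨_, h, Or.inr (Or.inl rfl)⟩, ⟨_, h, Or.inr (Or.inr rfl)⟩]
    have hnv : ∀ z : Fin (N k), (z = v k ∨ z = x k i0 ∨ z = y k i0) → z ∉ S := by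
      intro z hz hzS
      refine pair w z hw hzS ?_
      rcases hwp with rfl | rfl | rfl <;> rcases hz with rfl | rfl | rfl <;>
        (apply ne_of_val_ne'; simp only [u, v, p, q, x, y]; omega)
    exact ⟨v k, x k i0, y k i0, hnv _ (Or.inl rfl), hnv _ (Or.inr (Or.inl rfl)),
      hnv _ (Or.inr (Or.inr rfl)), adj_vx i0, adj_vy i0, adj_xy i0⟩
  · push_neg at h
    exact ⟨u k, p k i0, q k i0, h.1, h.2.1, h.2.2, adj_up i0, adj_uq i0, adj_pq i0⟩

end Stmt10

namespace Stmt10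
variable {k : ℕ}

def Svs : Finset (Fin (N k)) := {u k, v k}

lemma Svs_card : (Svs : Finset (Fin (N k))).card = 2 := by
  rw [Svs, Finset.card_insert_of_notMem, Finset.card_singleton]
  simp only [Finset.mem_singleton]
  apply ne_of_val_ne'
  simp only [u, v]; omega

lemma not_mem_Svs {a : Fin (N k)} (h1 : a ≠ u k) (h2 : a ≠ v k) : a ∉ (Svs : Finset (Fin (N k))) := by
  simp only [Svs, Finset.mem_insert, Finset.mem_singleton]
  tauto

lemma colorable2_vs :
    ((G k).induce (((Svs : Finset (Fin (N k))) : Set (Fin (N k)))ᶜ)).Colorable 2 := by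
  refine ⟨SimpleGraph.Coloring.mk (fun a => col2 a.1) ?_⟩
  rintro ⟨a, ha⟩ ⟨b, hb⟩ hab
  have hab' : (G k).Adj a b := hab
  have ha' : ¬(a = u k ∨ a = v k) := by
    simpa [Svs] using ha
  have hb' : ¬(b = u k ∨ b = v k) := by
    simpa [Svs] using hb
  push_neg at ha' hb'
  exact col2_valid hab' ha'.1 ha'.2 hb'.1 hb'.2

def Sivs : Finset (Fin (N k)) := insert (v k) (Finset.image (q k) Finset.univ)

lemma q_inj : Function.Injective (q k) := fun i j h => hinj_pq i j (Or.inr (Or.inr h))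

lemma Sivs_card : (Sivs : Finset (Fin (N k))).card = k + 1 := by
  rw [Sivs, Finset.card_insert_of_notMem, Finset.card_image_of_injective _ q_inj,
    Finset.card_univ, Fintype.card_fin]
  simp only [Finset.mem_image, not_exists]
  intro i h
  exact absurd h.2 (ne_of_val_ne' (by simp only [q, v]; omega))

lemma mem_Sivs_iff {a : Fin (N k)} :
    a ∈ (Sivs : Finset (Fin (N k))) ↔ a = v k ∨ ∃ i, a = q k i := by
  simp only [Sivs, Finset.mem_insert, Finset.mem_image, Finset.mem_univ, true_and]
  constructor
  · rintro (h | ⟨i, h⟩)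
    exacts [Or.inl h, Or.inr ⟨i, h.symm⟩]
  · rintro (h | ⟨i, h⟩)
    exacts [Or.inl h, Or.inr ⟨i, h.symm⟩]

lemma Sivs_indep : ∀ a ∈ (Sivs : Finset (Fin (N k))), ∀ b ∈ Sivs, ¬ (G k).Adj a b := by
  intro a ha b hb hadj
  rw [mem_Sivs_iff] at ha hb
  rw [G, SimpleGraph.fromRel_adj] at hadj
  obtain ⟨hne, h⟩ := hadj
  rcases ha with rfl | ⟨i', rfl⟩ <;> rcases hb with rfl | ⟨j', rfl⟩ <;>
  rcases h with (⟨h1, h2⟩ | ⟨i, ⟨h1, h2⟩ | ⟨h1, h2⟩ | ⟨h1, h2⟩ | ⟨h1, h2⟩ | ⟨h1, h2⟩ |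
      ⟨h1, h2⟩ | ⟨h1, h2⟩⟩) | (⟨h1, h2⟩ | ⟨i, ⟨h1, h2⟩ | ⟨h1, h2⟩ | ⟨h1, h2⟩ | ⟨h1, h2⟩ |
      ⟨h1, h2⟩ | ⟨h1, h2⟩ | ⟨h1, h2⟩⟩) <;>
    (simp only [u, v, p, q, x, y, Fin.mk.injEq] at h1 h2 hne ⊢ <;> omega)

lemma not_mem_Sivs {a : Fin (N k)} (h1 : a ≠ v k) (h2 : ∀ i, a ≠ q k i) :
    a ∉ (Sivs : Finset (Fin (N k))) := by
  rw [mem_Sivs_iff]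
  rintro (h | ⟨i, h⟩)
  exacts [h1 h, h2 i h]

lemma colorable2_ivs :
    ((G k).induce (((Sivs : Finset (Fin (N k))) : Set (Fin (N k)))ᶜ)).Colorable 2 := by
  refine ⟨SimpleGraph.Coloring.mk (fun a => col2' a.1) ?_⟩
  rintro ⟨a, ha⟩ ⟨b, hb⟩ hab
  have hab' : (G k).Adj a b := hab
  have ha' : a ∉ (Sivs : Finset (Fin (N k))) := by simpa using ha
  have hb' : b ∉ (Sivs : Finset (Fin (N k))) := by simpa using hb
  rw [mem_Sivs_iff] at ha' hb'
  push_neg at ha' hb'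
  exact col2'_valid hab' ha'.1 ha'.2 hb'.1 hb'.2

end Stmt10

namespace Stmt10
variable {k : ℕ}

lemma vs_eq (hk : 1 ≤ k) : vsChi (G k) = 2 := by
  classical
  have hG := chromNum_G (k := k) hk
  have i0 : Fin k := ⟨0, hk⟩
  have hmem : 2 ∈ {m : ℕ | ∃ S : Finset (Fin (N k)), S.card = m ∧
      chromNum ((G k).induce ((S : Set (Fin (N k)))ᶜ)) = chromNum (G k) - 1} := by
    refine ⟨Svs, Svs_card, ?_⟩
    rw [hG]
    have hp : p k i0 ∉ (Svs : Finset (Fin (N k))) :=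
      not_mem_Svs (ne_of_val_ne' (by simp only [p, u]; omega))
        (ne_of_val_ne' (by simp only [p, v]; omega))
    have hq : q k i0 ∉ (Svs : Finset (Fin (N k))) :=
      not_mem_Svs (ne_of_val_ne' (by simp only [q, u]; omega))
        (ne_of_val_ne' (by simp only [q, v]; omega))
    exact chromNum_eq_two _ colorable2_vs
      (induce_adj_of_adj (a := ⟨p k i0, mem_compl_coe hp⟩)
        (b := ⟨q k i0, mem_compl_coe hq⟩) (adj_pq i0))
  rw [vsChi]
  refine le_antisymm (Nat.sInf_le hmem) (le_csInf ⟨2, hmem⟩ ?_)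
  rintro m ⟨S, rfl, hS⟩
  by_contra hlt
  push_neg at hlt
  obtain ⟨a, b, c, ha, hb, hc, hab, hac, hbc⟩ := triangle_survives_one hk S (by omega)
  rw [hG] at hS
  exact chromNum_induce_ne_two ha hb hc hab hac hbc hS

lemma ivs_eq (hk : 1 ≤ k) : ivsChi (G k) = k + 1 := by
  classical
  have hG := chromNum_G (k := k) hk
  have i0 : Fin k := ⟨0, hk⟩
  have hmem : k + 1 ∈ {m : ℕ | ∃ S : Finset (Fin (N k)), S.card = m ∧
      (∀ a ∈ S, ∀ b ∈ S, ¬ (G k).Adj a b) ∧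
      chromNum ((G k).induce ((S : Set (Fin (N k)))ᶜ)) = chromNum (G k) - 1} := by
    refine ⟨Sivs, Sivs_card, Sivs_indep, ?_⟩
    rw [hG]
    have hu : u k ∉ (Sivs : Finset (Fin (N k))) :=
      not_mem_Sivs (ne_of_val_ne' (by simp only [u, v]; omega))
        (fun i => ne_of_val_ne' (by simp only [u, q]; omega))
    have hp : p k i0 ∉ (Sivs : Finset (Fin (N k))) :=
      not_mem_Sivs (ne_of_val_ne' (by simp only [p, v]; omega))
        (fun i => ne_of_val_ne' (by simp only [p, q]; omega))
    exact chromNum_eq_two _ colorable2_ivs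
      (induce_adj_of_adj (a := ⟨u k, mem_compl_coe hu⟩)
        (b := ⟨p k i0, mem_compl_coe hp⟩) (adj_up i0))
  rw [ivsChi]
  refine le_antisymm (Nat.sInf_le hmem) (le_csInf ⟨k + 1, hmem⟩ ?_)
  rintro m ⟨S, rfl, hind, hS⟩
  by_contra hlt
  push_neg at hlt
  obtain ⟨a, b, c, ha, hb, hc, hab, hac, hbc⟩ := triangle_survives hk S (by omega) hind
  rw [hG] at hS
  exact chromNum_induce_ne_two ha hb hc hab hac hbc hS

end Stmt10


/-- For every natural number $k ≥ 1$ there exists a finite simple graph $G$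
with $χ(G) = 3$, $vs_χ(G) = 2$, and $ivs_χ(G) = k + 1$. -/
theorem stmt_10 (k : ℕ) (hk : 1 ≤ k) :
    ∃ (n : ℕ) (G : SimpleGraph (Fin n)),
      chromNum G = 3 ∧ vsChi G = 2 ∧ ivsChi G = k + 1 :=
  ⟨Stmt10.N k, Stmt10.G k, Stmt10.chromNum_G hk, Stmt10.vs_eq hk, Stmt10.ivs_eq hk⟩
end

section
/- For every odd natural number k ≥ 3 there exists a finite simple graph G with Δ(G) = k, χ(G) = (k + 1)/2, vs_χ(G) = 2, and ivs_χ(G) = 3; in particular, the equality vs_χ = ivs_χ can fail for graphs with χ(G) = (Δ(G) + 1)/2. -/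
open SimpleGraph

-- ===== auxiliary development =====

/-- central adjacency relation on natural labels -/
def grel (t a b : ℕ) : Prop :=
  (a < 2 ∧ b < 2) ∨
  (a = 0 ∧ 2 ≤ b ∧ b < 2*t+2) ∨ (b = 0 ∧ 2 ≤ a ∧ a < 2*t+2) ∨
  (a = 1 ∧ 2*t+2 ≤ b) ∨ (b = 1 ∧ 2*t+2 ≤ a) ∨
  (∃ c, c < 4 ∧ 2+c*t ≤ a ∧ a < 2+c*t+t ∧ 2+c*t ≤ b ∧ b < 2+c*t+t)

lemma grel_symm {t a b : ℕ} (h : grel t a b) : grel t b a := by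
  unfold grel at h ⊢
  rcases h with h|h|h|h|h|⟨c,h1,h2,h3,h4,h5⟩
  · exact Or.inl ⟨h.2, h.1⟩
  · exact Or.inr (Or.inr (Or.inl h))
  · exact Or.inr (Or.inl h)
  · exact Or.inr (Or.inr (Or.inr (Or.inr (Or.inl h))))
  · exact Or.inr (Or.inr (Or.inr (Or.inl h)))
  · exact Or.inr (Or.inr (Or.inr (Or.inr (Or.inr ⟨c,h1,h4,h5,h2,h3⟩))))

def gr (t : ℕ) : SimpleGraph (Fin (4*t+2)) where
  Adj x y := x ≠ y ∧ grel t x.val y.val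
  symm := ⟨fun x y ⟨h1, h2⟩ => ⟨h1.symm, grel_symm h2⟩⟩
  loopless := ⟨fun x ⟨h, _⟩ => h rfl⟩

lemma gr_adj {t : ℕ} {x y : Fin (4*t+2)} :
    (gr t).Adj x y ↔ x ≠ y ∧ grel t x.val y.val := Iff.rfl

lemma chromNum_eq_of {V : Type*} (G : SimpleGraph V) (m : ℕ)
    (h1 : G.Colorable m) (h2 : ∀ c, G.Colorable c → m ≤ c) :
    chromNum G = m :=
  le_antisymm (Nat.sInf_le (show m ∈ {n : ℕ | G.Colorable n} from h1))
    (h2 _ (Nat.sInf_mem (⟨m, h1⟩ : {n : ℕ | G.Colorable n}.Nonempty)))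

lemma clique_le_color {V : Type*} (G : SimpleGraph V) {m c : ℕ}
    (f : Fin m → V) (hf : ∀ i j : Fin m, i ≠ j → G.Adj (f i) (f j))
    (hc : G.Colorable c) : m ≤ c := by
  obtain ⟨C⟩ := hc
  have hinj : Function.Injective fun i => C (f i) := by
    intro i j h
    by_contra hne
    exact C.valid (hf i j hne) h
  simpa using Fintype.card_le_of_injective _ hinj

lemma colorable_of_fn {V : Type*} (G : SimpleGraph V) (n : ℕ) (c : V → Fin n)
    (h : ∀ a b, G.Adj a b → c a ≠ c b) : G.Colorable n :=
  ⟨Coloring.mk c (fun hab => h _ _ hab)⟩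

lemma induce_colorable {V : Type*} (G : SimpleGraph V) (s : Set V) {n : ℕ}
    (h : G.Colorable n) : (G.induce s).Colorable n := by
  obtain ⟨C⟩ := h
  exact ⟨Coloring.mk (fun x => C x.1) (fun hab => C.valid hab)⟩

/-- vertex function for the clique with centre `cent` and block `c` -/
def cf (t cent c : ℕ) (i : Fin (t+1)) : ℕ :=
  if i.val = 0 then cent else 2 + c*t + (i.val - 1)

lemma cf_lt {t cent c : ℕ} (hcent : cent < 2) (hc : c < 4) (i : Fin (t+1)) :
    cf t cent c i < 4*t+2 := by
  have h3 : c*t ≤ 3*t := Nat.mul_le_mul_right t (by omega)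
  have hi := i.isLt
  unfold cf; split_ifs <;> omega

lemma cf_mem {t cent c : ℕ} (i : Fin (t+1)) :
    cf t cent c i = cent ∨ (2+c*t ≤ cf t cent c i ∧ cf t cent c i < 2+c*t+t) := by
  have hi := i.isLt
  unfold cf; split_ifs with h
  · exact Or.inl rfl
  · exact Or.inr ⟨by omega, by omega⟩

lemma cf_rel {t cent c : ℕ} (ht : 1 ≤ t)
    (hcc : (cent = 0 ∧ c < 2) ∨ (cent = 1 ∧ 2 ≤ c ∧ c < 4))
    (i j : Fin (t+1)) (hij : i ≠ j) :
    cf t cent c i ≠ cf t cent c j ∧ grel t (cf t cent c i) (cf t cent c j) := by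
  have hvij : i.val ≠ j.val := fun h => hij (Fin.ext h)
  have hi := i.isLt
  have hj := j.isLt
  have hc4 : c < 4 := by rcases hcc with ⟨_,h⟩|⟨_,h1,h2⟩ <;> omega
  have h3 : c*t ≤ 3*t := Nat.mul_le_mul_right t (by omega)
  unfold cf grel
  split_ifs with h0i h0j h0j
  · omega
  · -- i is the centre, j in the block
    rcases hcc with ⟨hc0, hcb⟩|⟨hc1, hcb1, hcb2⟩
    · have h1 : c*t ≤ 1*t := Nat.mul_le_mul_right t (by omega)
      exact ⟨by omega, Or.inr (Or.inl ⟨by omega, by omega, by omega⟩)⟩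
    · have h1 : 2*t ≤ c*t := Nat.mul_le_mul_right t (by omega)
      exact ⟨by omega, Or.inr (Or.inr (Or.inr (Or.inl ⟨by omega, by omega⟩)))⟩
  · -- j is the centre, i in the block
    rcases hcc with ⟨hc0, hcb⟩|⟨hc1, hcb1, hcb2⟩
    · have h1 : c*t ≤ 1*t := Nat.mul_le_mul_right t (by omega)
      exact ⟨by omega, Or.inr (Or.inr (Or.inl ⟨by omega, by omega, by omega⟩))⟩
    · have h1 : 2*t ≤ c*t := Nat.mul_le_mul_right t (by omega)
      exact ⟨by omega, Or.inr (Or.inr (Or.inr (Or.inr (Or.inl ⟨by omega, by omega⟩))))⟩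
  · -- both in the block
    exact ⟨by omega, Or.inr (Or.inr (Or.inr (Or.inr (Or.inr
      ⟨c, hc4, by omega, by omega, by omega, by omega⟩))))⟩

lemma clique_le_color_induce {t cent c : ℕ} (ht : 1 ≤ t)
    (hcc : (cent = 0 ∧ c < 2) ∨ (cent = 1 ∧ 2 ≤ c ∧ c < 4))
    (s : Set (Fin (4*t+2)))
    (hs : ∀ x : Fin (4*t+2), (x.val = cent ∨ (2+c*t ≤ x.val ∧ x.val < 2+c*t+t)) → x ∈ s)
    {n : ℕ} (hcol : ((gr t).induce s).Colorable n) : t+1 ≤ n := by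
  have hcent : cent < 2 := by rcases hcc with ⟨h,_⟩|⟨h,_⟩ <;> omega
  have hc4 : c < 4 := by rcases hcc with ⟨_,h⟩|⟨_,h1,h2⟩ <;> omega
  refine clique_le_color _ (fun i => ⟨⟨cf t cent c i, cf_lt hcent hc4 i⟩,
    hs _ (cf_mem i)⟩) ?_ hcol
  intro i j hij
  obtain ⟨h1, h2⟩ := cf_rel ht hcc i j hij
  exact ⟨fun h => h1 (congrArg Fin.val h), h2⟩

lemma clique_le_color_gr {t cent c : ℕ} (ht : 1 ≤ t)
    (hcc : (cent = 0 ∧ c < 2) ∨ (cent = 1 ∧ 2 ≤ c ∧ c < 4))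
    {n : ℕ} (hcol : (gr t).Colorable n) : t+1 ≤ n := by
  have hcent : cent < 2 := by rcases hcc with ⟨h,_⟩|⟨h,_⟩ <;> omega
  have hc4 : c < 4 := by rcases hcc with ⟨_,h⟩|⟨_,h1,h2⟩ <;> omega
  refine clique_le_color _ (fun i => ⟨cf t cent c i, cf_lt hcent hc4 i⟩) ?_ hcol
  intro i j hij
  obtain ⟨h1, h2⟩ := cf_rel ht hcc i j hij
  exact ⟨fun h => h1 (congrArg Fin.val h), h2⟩

/-- the (t+1)-colouring of `gr t` -/
def col1 (t x : ℕ) : ℕ :=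
  if x = 0 then 0 else if x = 1 then 1
  else if x < t+2 then x - 1
  else if x < 2*t+2 then x - (t+2) + 1
  else if x < 3*t+2 then (if x = 2*t+2 then 0 else x - (2*t+2) + 1)
  else (if x = 3*t+2 then 0 else x - (3*t+2) + 1)

lemma col1_spec (t x : ℕ) (ht : 1 ≤ t) (hx : x < 4*t+2) :
    (x = 0 ∧ col1 t x = 0) ∨ (x = 1 ∧ col1 t x = 1) ∨
    (2 ≤ x ∧ x < t+2 ∧ col1 t x = x - 1) ∨
    (t+2 ≤ x ∧ x < 2*t+2 ∧ col1 t x = x - (t+2) + 1) ∨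
    (x = 2*t+2 ∧ col1 t x = 0) ∨ (2*t+3 ≤ x ∧ x < 3*t+2 ∧ col1 t x = x - (2*t+2) + 1) ∨
    (x = 3*t+2 ∧ col1 t x = 0) ∨ (3*t+3 ≤ x ∧ col1 t x = x - (3*t+2) + 1) := by
  unfold col1; split_ifs <;> omega

lemma col1_lt {t : ℕ} (ht : 1 ≤ t) {x : ℕ} (hx : x < 4*t+2) : col1 t x < t+1 := by
  have := col1_spec t x ht hx; omega

lemma col1_proper {t : ℕ} (ht : 1 ≤ t) {a b : ℕ} (ha : a < 4*t+2) (hb : b < 4*t+2)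
    (hne : a ≠ b) (hrel : grel t a b) : col1 t a ≠ col1 t b := by
  have sa := col1_spec t a ht ha
  have sb := col1_spec t b ht hb
  unfold grel at hrel
  rcases hrel with h|h|h|h|h|⟨c,hc,h⟩
  · omega
  · omega
  · omega
  · omega
  · omega
  · interval_cases c <;> omega

lemma chrom_gr {t : ℕ} (ht : 1 ≤ t) : chromNum (gr t) = t+1 := by
  apply chromNum_eq_of
  · refine colorable_of_fn _ _ (fun x => ⟨col1 t x.val, col1_lt ht x.isLt⟩) ?_
    rintro a b ⟨hne, hrel⟩ h
    exact col1_proper ht a.isLt b.isLt (fun hv => hne (Fin.ext hv)) hrel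
      (congrArg Fin.val h)
  · intro c hc
    exact clique_le_color_gr ht (cent := 0) (c := 0) (Or.inl ⟨rfl, by omega⟩) hc

lemma gr_colorable {t : ℕ} (ht : 1 ≤ t) : (gr t).Colorable (t+1) := by
  refine colorable_of_fn _ _ (fun x => ⟨col1 t x.val, col1_lt ht x.isLt⟩) ?_
  rintro a b ⟨hne, hrel⟩ h
  exact col1_proper ht a.isLt b.isLt (fun hv => hne (Fin.ext hv)) hrel
    (congrArg Fin.val h)

lemma fin_ne_of_val {n : ℕ} {x y : Fin n} (h : x.val ≠ y.val) : x ≠ y :=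
  fun he => h (congrArg Fin.val he)

/-- key lemma: removing at most two pairwise non-adjacent vertices leaves
chromatic number `t+1`. -/
lemma main_avoid {t : ℕ} (ht : 1 ≤ t) (S : Finset (Fin (4*t+2))) (h2 : S.card ≤ 2)
    (hind : ∀ a ∈ S, ∀ b ∈ S, ¬ (gr t).Adj a b) :
    chromNum ((gr t).induce ((S : Set (Fin (4*t+2)))ᶜ)) = t + 1 := by
  have hav : ∃ cent c : ℕ, ((cent = 0 ∧ c < 2) ∨ (cent = 1 ∧ 2 ≤ c ∧ c < 4)) ∧
      ∀ x : Fin (4*t+2), (x.val = cent ∨ (2+c*t ≤ x.val ∧ x.val < 2+c*t+t)) → x ∉ S := by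
    by_contra hno
    push_neg at hno
    obtain ⟨x1, hx1p, hx1⟩ := hno 0 0 (Or.inl ⟨rfl, by omega⟩)
    obtain ⟨x2, hx2p, hx2⟩ := hno 0 1 (Or.inl ⟨rfl, by omega⟩)
    obtain ⟨y1, hy1p, hy1⟩ := hno 1 2 (Or.inr ⟨rfl, by omega, by omega⟩)
    obtain ⟨y2, hy2p, hy2⟩ := hno 1 3 (Or.inr ⟨rfl, by omega, by omega⟩)
    have hx1y1 : x1 ≠ y1 := fin_ne_of_val (by omega)
    have hx1y2 : x1 ≠ y2 := fin_ne_of_val (by omega)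
    have hx2y1 : x2 ≠ y1 := fin_ne_of_val (by omega)
    have hcard3 : ∀ a b c : Fin (4*t+2), a ∈ S → b ∈ S → c ∈ S →
        a ≠ b → a ≠ c → b ≠ c → False := by
      intro a b c hma hmb hmc hab hac hbc
      have hsub : ({a, b, c} : Finset (Fin (4*t+2))) ⊆ S := by
        intro z hz
        simp only [Finset.mem_insert, Finset.mem_singleton] at hz
        rcases hz with rfl|rfl|rfl <;> assumption
      have h3 : ({a, b, c} : Finset (Fin (4*t+2))).card = 3 := by
        rw [Finset.card_insert_of_notMem (by simp [hab, hac]),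
          Finset.card_insert_of_notMem (by simp [hbc]), Finset.card_singleton]
      have := Finset.card_le_card hsub
      omega
    have hux : x1.val = 0 := by
      by_contra h0
      have hx12 : x1 ≠ x2 := by
        refine fin_ne_of_val ?_
        omega
      exact hcard3 x1 x2 y1 hx1 hx2 hy1 hx12 hx1y1 hx2y1
    have hvy : y1.val = 1 := by
      by_contra h0
      have hy12 : y1 ≠ y2 := by
        refine fin_ne_of_val ?_
        omega
      exact hcard3 y1 y2 x1 hy1 hy2 hx1 hy12 hx1y1.symm hx1y2.symm
    exact hind x1 hx1 y1 hy1 ⟨fin_ne_of_val (by omega),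
      Or.inl (by omega)⟩
  obtain ⟨cent, c, hcc, havoid⟩ := hav
  apply chromNum_eq_of
  · exact induce_colorable _ _ (gr_colorable ht)
  · intro n hn
    refine clique_le_color_induce ht hcc _ (fun x hx => ?_) hn
    simp only [Set.mem_compl_iff, Finset.mem_coe]
    exact havoid x hx

/-- lower bound via the clique `{2,…,t+1}` (block 0 without the centre) -/
lemma block0_clique_le {t : ℕ} (ht : 1 ≤ t) (s : Set (Fin (4*t+2)))
    (hs : ∀ x : Fin (4*t+2), 2 ≤ x.val → x.val < 2+t → x ∈ s)
    {n : ℕ} (hn : ((gr t).induce s).Colorable n) : t ≤ n := by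
  refine clique_le_color _ (fun i : Fin t => ⟨⟨2+i.val, by omega⟩,
    hs _ (by simp) (by have := i.isLt; simp <;> omega)⟩) ?_ hn
  intro i j hij
  have hv : i.val ≠ j.val := fun h => hij (Fin.ext h)
  have hi := i.isLt
  have hj := j.isLt
  refine ⟨fin_ne_of_val (by simp <;> omega), ?_⟩
  exact Or.inr (Or.inr (Or.inr (Or.inr (Or.inr
    ⟨0, by omega, by simp <;> omega, by simp <;> omega, by simp <;> omega,
      by simp <;> omega⟩))))

def col2 (t x : ℕ) : ℕ :=
  if x < t+2 then x - 2
  else if x < 2*t+2 then x - (t+2)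
  else if x < 3*t+2 then x - (2*t+2)
  else x - (3*t+2)

lemma col2_spec (t x : ℕ) (ht : 1 ≤ t) (hx : x < 4*t+2) :
    (x < t+2 ∧ col2 t x = x - 2) ∨
    (t+2 ≤ x ∧ x < 2*t+2 ∧ col2 t x = x - (t+2)) ∨
    (2*t+2 ≤ x ∧ x < 3*t+2 ∧ col2 t x = x - (2*t+2)) ∨
    (3*t+2 ≤ x ∧ col2 t x = x - (3*t+2)) := by
  unfold col2; split_ifs <;> omega

lemma col2_lt {t : ℕ} (ht : 1 ≤ t) {x : ℕ} (hx : x < 4*t+2) : col2 t x < t := by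
  have := col2_spec t x ht hx; omega

lemma col2_proper {t : ℕ} (ht : 1 ≤ t) {a b : ℕ} (ha : a < 4*t+2) (hb : b < 4*t+2)
    (ha2 : 2 ≤ a) (hb2 : 2 ≤ b) (hne : a ≠ b) (hrel : grel t a b) :
    col2 t a ≠ col2 t b := by
  have sa := col2_spec t a ht ha
  have sb := col2_spec t b ht hb
  unfold grel at hrel
  rcases hrel with h|h|h|h|h|⟨c,hc,h⟩
  · omega
  · omega
  · omega
  · omega
  · omega
  · interval_cases c <;> omega

def col3 (t x : ℕ) : ℕ :=
  if x = 1 then t - 1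
  else if x < t+2 then x - 2
  else if x < 2*t+2 then x - (t+2)
  else if x < 3*t+2 then x - (2*t+2) - 1
  else x - (3*t+2) - 1

lemma col3_spec (t x : ℕ) (ht : 1 ≤ t) (hx : x < 4*t+2) :
    (x = 1 ∧ col3 t x = t - 1) ∨
    (x ≠ 1 ∧ x < t+2 ∧ col3 t x = x - 2) ∨
    (t+2 ≤ x ∧ x < 2*t+2 ∧ col3 t x = x - (t+2)) ∨
    (2*t+2 ≤ x ∧ x < 3*t+2 ∧ col3 t x = x - (2*t+2) - 1) ∨
    (3*t+2 ≤ x ∧ col3 t x = x - (3*t+2) - 1) := by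
  unfold col3; split_ifs <;> omega

lemma col3_lt {t : ℕ} (ht : 1 ≤ t) {x : ℕ} (hx : x < 4*t+2) : col3 t x < t := by
  have := col3_spec t x ht hx; omega

lemma col3_proper {t : ℕ} (ht : 1 ≤ t) {a b : ℕ} (ha : a < 4*t+2) (hb : b < 4*t+2)
    (ha0 : a ≠ 0) (ha1 : a ≠ 2*t+2) (ha2 : a ≠ 3*t+2)
    (hb0 : b ≠ 0) (hb1 : b ≠ 2*t+2) (hb2 : b ≠ 3*t+2)
    (hne : a ≠ b) (hrel : grel t a b) :
    col3 t a ≠ col3 t b := by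
  have sa := col3_spec t a ht ha
  have sb := col3_spec t b ht hb
  unfold grel at hrel
  rcases hrel with h|h|h|h|h|⟨c,hc,h⟩
  · omega
  · omega
  · omega
  · omega
  · omega
  · interval_cases c <;> omega

lemma grel_not_S3 {t : ℕ} (ht : 1 ≤ t) {a b : ℕ}
    (ha : a = 0 ∨ a = 2*t+2 ∨ a = 3*t+2) (hb : b = 0 ∨ b = 2*t+2 ∨ b = 3*t+2)
    (hne : a ≠ b) :
    ¬ grel t a b := by
  intro h
  unfold grel at h
  rcases h with h|h|h|h|h|⟨c,hc,h⟩
  · omega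
  · omega
  · omega
  · omega
  · omega
  · interval_cases c <;> omega

lemma chrom_S2 {t : ℕ} (ht : 1 ≤ t) :
    chromNum ((gr t).induce
      ((↑({⟨0, by omega⟩, ⟨1, by omega⟩} : Finset (Fin (4*t+2))) : Set (Fin (4*t+2)))ᶜ)) = t := by
  apply chromNum_eq_of
  · have hmem : ∀ z : ((↑({⟨0, by omega⟩, ⟨1, by omega⟩} : Finset (Fin (4*t+2))) :
        Set (Fin (4*t+2)))ᶜ : Set (Fin (4*t+2))), 2 ≤ (z : Fin (4*t+2)).val := by
      intro z
      have hz := z.2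
      simp only [Finset.coe_insert, Finset.coe_singleton, Set.mem_compl_iff,
        Set.mem_insert_iff, Set.mem_singleton_iff] at hz
      push_neg at hz
      have h0 : (z : Fin (4*t+2)).val ≠ 0 := fun h => hz.1 (Fin.ext h)
      have h1 : (z : Fin (4*t+2)).val ≠ 1 := fun h => hz.2 (Fin.ext h)
      omega
    refine colorable_of_fn _ _
      (fun z => ⟨col2 t (z : Fin (4*t+2)).val, col2_lt ht (z : Fin (4*t+2)).isLt⟩) ?_
    rintro a b ⟨hne, hrel⟩ h
    exact col2_proper ht (a : Fin (4*t+2)).isLt (b : Fin (4*t+2)).isLt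
      (hmem a) (hmem b) (fun hv => hne (Fin.ext hv)) hrel (congrArg Fin.val h)
  · intro n hn
    refine block0_clique_le ht _ (fun x h2 hlt => ?_) hn
    simp only [Finset.coe_insert, Finset.coe_singleton, Set.mem_compl_iff,
      Set.mem_insert_iff, Set.mem_singleton_iff]
    push_neg
    constructor <;> (intro h; rw [h] at h2; simp at h2)

lemma chrom_S3 {t : ℕ} (ht : 1 ≤ t) :
    chromNum ((gr t).induce
      ((↑({⟨0, by omega⟩, ⟨2*t+2, by omega⟩, ⟨3*t+2, by omega⟩} :
        Finset (Fin (4*t+2))) : Set (Fin (4*t+2)))ᶜ)) = t := by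
  apply chromNum_eq_of
  · have hmem : ∀ z : ((↑({⟨0, by omega⟩, ⟨2*t+2, by omega⟩, ⟨3*t+2, by omega⟩} :
        Finset (Fin (4*t+2))) : Set (Fin (4*t+2)))ᶜ : Set (Fin (4*t+2))),
        (z : Fin (4*t+2)).val ≠ 0 ∧ (z : Fin (4*t+2)).val ≠ 2*t+2 ∧
        (z : Fin (4*t+2)).val ≠ 3*t+2 := by
      intro z
      have hz := z.2
      simp only [Finset.coe_insert, Finset.coe_singleton, Set.mem_compl_iff,
        Set.mem_insert_iff, Set.mem_singleton_iff] at hz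
      push_neg at hz
      exact ⟨fun h => hz.1 (Fin.ext h), fun h => hz.2.1 (Fin.ext h),
        fun h => hz.2.2 (Fin.ext h)⟩
    refine colorable_of_fn _ _
      (fun z => ⟨col3 t (z : Fin (4*t+2)).val, col3_lt ht (z : Fin (4*t+2)).isLt⟩) ?_
    rintro a b ⟨hne, hrel⟩ h
    obtain ⟨ha0, ha1, ha2⟩ := hmem a
    obtain ⟨hb0, hb1, hb2⟩ := hmem b
    exact col3_proper ht (a : Fin (4*t+2)).isLt (b : Fin (4*t+2)).isLt
      ha0 ha1 ha2 hb0 hb1 hb2 (fun hv => hne (Fin.ext hv)) hrel (congrArg Fin.val h)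
  · intro n hn
    refine block0_clique_le ht _ (fun x h2 hlt => ?_) hn
    simp only [Finset.coe_insert, Finset.coe_singleton, Set.mem_compl_iff,
      Set.mem_insert_iff, Set.mem_singleton_iff]
    push_neg
    refine ⟨?_, ?_, ?_⟩ <;> (intro h; rw [h] at h2 hlt; simp at h2 hlt <;> omega)

lemma vs_eq {t : ℕ} (ht : 1 ≤ t) : vsChi (gr t) = 2 := by
  unfold vsChi
  have h2 : 2 ∈ {k : ℕ | ∃ S : Finset (Fin (4*t+2)), S.card = k ∧
      chromNum ((gr t).induce ((S : Set (Fin (4*t+2)))ᶜ)) = chromNum (gr t) - 1} := by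
    refine ⟨{⟨0, by omega⟩, ⟨1, by omega⟩}, ?_, ?_⟩
    · rw [Finset.card_insert_of_notMem (by simp [Fin.ext_iff]), Finset.card_singleton]
    · rw [chrom_gr ht, chrom_S2 ht]
      omega
  refine le_antisymm (Nat.sInf_le h2) ?_
  obtain ⟨S, hcard, hchrom⟩ := Nat.sInf_mem (⟨2, h2⟩ : Set.Nonempty _)
  by_contra hlt
  push_neg at hlt
  have hcard2 : S.card ≤ 2 := by omega
  have hind : ∀ a ∈ S, ∀ b ∈ S, ¬ (gr t).Adj a b := by
    intro a ha b hb
    have hab : a = b := Finset.card_le_one.mp (by omega) a ha b hb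
    subst hab
    exact fun h => h.1 rfl
  have hma := main_avoid ht S hcard2 hind
  rw [chrom_gr ht] at hchrom
  rw [hma] at hchrom
  omega

lemma ivs_eq {t : ℕ} (ht : 1 ≤ t) : ivsChi (gr t) = 3 := by
  unfold ivsChi
  have h3 : 3 ∈ {k : ℕ | ∃ S : Finset (Fin (4*t+2)), S.card = k ∧
      (∀ a ∈ S, ∀ b ∈ S, ¬ (gr t).Adj a b) ∧
      chromNum ((gr t).induce ((S : Set (Fin (4*t+2)))ᶜ)) = chromNum (gr t) - 1} := by
    refine ⟨{⟨0, by omega⟩, ⟨2*t+2, by omega⟩, ⟨3*t+2, by omega⟩}, ?_, ?_, ?_⟩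
    · rw [Finset.card_insert_of_notMem (by simp [Fin.ext_iff] <;> omega),
        Finset.card_insert_of_notMem (by simp [Fin.ext_iff] <;> omega),
        Finset.card_singleton]
    · intro a ha b hb hadj
      simp only [Finset.mem_insert, Finset.mem_singleton] at ha hb
      have hav : a.val = 0 ∨ a.val = 2*t+2 ∨ a.val = 3*t+2 := by
        rcases ha with rfl|rfl|rfl <;> simp
      have hbv : b.val = 0 ∨ b.val = 2*t+2 ∨ b.val = 3*t+2 := by
        rcases hb with rfl|rfl|rfl <;> simp
      exact grel_not_S3 ht hav hbv (fun h => hadj.1 (Fin.ext h)) hadj.2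
    · rw [chrom_gr ht, chrom_S3 ht]
      omega
  refine le_antisymm (Nat.sInf_le h3) ?_
  obtain ⟨S, hcard, hindS, hchrom⟩ := Nat.sInf_mem (⟨3, h3⟩ : Set.Nonempty _)
  by_contra hlt
  push_neg at hlt
  have hcard2 : S.card ≤ 2 := by omega
  have hma := main_avoid ht S hcard2 hindS
  rw [chrom_gr ht] at hchrom
  rw [hma] at hchrom
  omega

def phi (t y : ℕ) : ℕ :=
  if y < 2 then 0 else if y < 2*t+2 then y - 1 else y - (2*t+1)

lemma phi_spec (t y : ℕ) (ht : 1 ≤ t) (hy : y < 4*t+2) :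
    (y < 2 ∧ phi t y = 0) ∨ (2 ≤ y ∧ y < 2*t+2 ∧ phi t y = y - 1) ∨
    (2*t+2 ≤ y ∧ phi t y = y - (2*t+1)) := by
  unfold phi; split_ifs <;> omega

lemma phi_lt {t : ℕ} (ht : 1 ≤ t) {y : ℕ} (hy : y < 4*t+2) : phi t y < 2*t+1 := by
  have := phi_spec t y ht hy; omega

lemma deg_le {t : ℕ} (ht : 1 ≤ t) (x : Fin (4*t+2)) :
    Nat.card ((gr t).neighborSet x) ≤ 2*t+1 := by
  have hinj : Function.Injective
      (fun y : (gr t).neighborSet x =>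
        (⟨phi t (y : Fin (4*t+2)).val, phi_lt ht (y : Fin (4*t+2)).isLt⟩ : Fin (2*t+1))) := by
    intro y z h
    have hphi : phi t (y : Fin (4*t+2)).val = phi t (z : Fin (4*t+2)).val :=
      congrArg Fin.val h
    obtain ⟨hney, hgy⟩ := y.2
    obtain ⟨hnez, hgz⟩ := z.2
    have hxy : x.val ≠ (y : Fin (4*t+2)).val := fun hv => hney (Fin.ext hv)
    have hxz : x.val ≠ (z : Fin (4*t+2)).val := fun hv => hnez (Fin.ext hv)
    have hsy := phi_spec t (y : Fin (4*t+2)).val ht (y : Fin (4*t+2)).isLt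
    have hsz := phi_spec t (z : Fin (4*t+2)).val ht (z : Fin (4*t+2)).isLt
    have hx := x.isLt
    apply Subtype.ext
    apply Fin.ext
    unfold grel at hgy hgz
    rcases hgy with hY|hY|hY|hY|hY|⟨cy,hcy,hY⟩ <;>
      rcases hgz with hZ|hZ|hZ|hZ|hZ|⟨cz,hcz,hZ⟩
    all_goals try omega
    all_goals try (interval_cases cy <;> omega)
    all_goals try (interval_cases cz <;> omega)
    all_goals (interval_cases cy <;> interval_cases cz <;> omega)
  have := Nat.card_le_card_of_injective _ hinj
  simpa using this

lemma deg_zero {t : ℕ} (ht : 1 ≤ t) :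
    Nat.card ((gr t).neighborSet (⟨0, by omega⟩ : Fin (4*t+2))) = 2*t+1 := by
  have hadj : ∀ i : Fin (2*t+1),
      (⟨i.val+1, by omega⟩ : Fin (4*t+2)) ∈ (gr t).neighborSet ⟨0, by omega⟩ := by
    intro i
    refine ⟨fin_ne_of_val (by simp), ?_⟩
    unfold grel
    by_cases h : i.val = 0
    · exact Or.inl ⟨by simp, by simp [h]⟩
    · exact Or.inr (Or.inl ⟨by simp, by simp <;> omega, by have := i.isLt; simp <;> omega⟩)
  have hbij : Function.Bijective
      (fun i : Fin (2*t+1) =>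
        (⟨⟨i.val+1, by omega⟩, hadj i⟩ : (gr t).neighborSet (⟨0, by omega⟩ : Fin (4*t+2)))) := by
    constructor
    · intro i j h
      simp only [Subtype.ext_iff, Fin.ext_iff] at h
      exact Fin.ext (by omega)
    · rintro ⟨y, hy⟩
      obtain ⟨hne, hrel⟩ := hy
      have hyv : y.val = 1 ∨ (2 ≤ y.val ∧ y.val < 2*t+2) := by
        have hne' : (0:ℕ) ≠ y.val := fun hv => hne (Fin.ext hv)
        unfold grel at hrel
        rcases hrel with h|h|h|h|h|⟨c,hc,h⟩
        · simp at h <;> omega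
        · simp at h <;> omega
        · simp at h <;> omega
        · simp at h
        · simp at h <;> omega
        · exfalso; interval_cases c <;> (simp at h <;> omega)
      refine ⟨⟨y.val - 1, by omega⟩, ?_⟩
      apply Subtype.ext
      apply Fin.ext
      simp
      omega
  have := Nat.card_eq_of_bijective _ hbij
  rw [← this]
  simp

lemma maxdeg_gr {t : ℕ} (ht : 1 ≤ t) : maxDeg (gr t) = 2*t+1 := by
  unfold maxDeg
  apply le_antisymm
  · exact Finset.sup_le (fun x _ => deg_le ht x)
  · have hle := Finset.le_sup (f := fun v => Nat.card ((gr t).neighborSet v))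
      (Finset.mem_univ (⟨0, by omega⟩ : Fin (4*t+2)))
    exact le_of_eq_of_le (deg_zero ht).symm hle


/-- For every odd natural number $k ≥ 3$ there exists a finite simple graph
$G$ with $Δ(G) = k$, $χ(G) = (k+1)/2$, $vs_χ(G) = 2$, and $ivs_χ(G) = 3$. -/
theorem stmt_11 (k : ℕ) (hk : 3 ≤ k) (hodd : Odd k) :
    ∃ (n : ℕ) (G : SimpleGraph (Fin n)),
      maxDeg G = k ∧ 2 * chromNum G = k + 1 ∧
      vsChi G = 2 ∧ ivsChi G = 3 := by
  obtain ⟨r, hr⟩ := hodd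
  have ht : 1 ≤ r := by omega
  refine ⟨4*r+2, gr r, ?_, ?_, vs_eq ht, ivs_eq ht⟩
  · rw [maxdeg_gr ht]; omega
  · rw [chrom_gr ht]; omega
end
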